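/- arXiv:2008.08846 — 7 statements merged into one kernel-verified Lean document; each statement's English description precedes it below -/
import Mathlib

section
/- Assume μ ≠ 0. Then the spectrum of T̃₀ equals the closed interval [V₀ − 2μ, V₀ + 2μ]. -/
set_option synthInstance.maxHeartbeats 1000000
set_option maxHeartbeats 1000000

open MeasureTheory Filter Topology ComplexConjugate ContinuousLinearMap
open scoped ENNReal Real

noncomputable section

/-- `𝒦̃ = ℓ²(ℤⁿ; ℂ)`. -/
abbrev Kt (n : ℕ) := lp (fun _ : (Fin n → ℤ) => ℂ) 2

/-- `𝒦 = ℓ²(ℤⁿ∖{0}; ℂ)`. -/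
abbrev Ks (n : ℕ) := lp (fun _ : {x : Fin n → ℤ // x ≠ 0} => ℂ) 2

/-- `L` is the family of shift operators: `(L_j ψ)(x) = ψ(x + e_j)`. -/
def IsShift {n : ℕ} (L : Fin n → (Kt n →L[ℂ] Kt n)) : Prop :=
  ∀ (j : Fin n) (ψ : Kt n) (x : Fin n → ℤ), (L j ψ) x = ψ (x + Pi.single j 1)

/-- `ι : 𝒦 → 𝒦̃` is extension by zero. -/
def IsIota {n : ℕ} (ι : Ks n →L[ℂ] Kt n) : Prop :=
  ∀ (φ : Ks n) (x : Fin n → ℤ), (ι φ) x = if h : x = 0 then 0 else φ ⟨x, h⟩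

/-- The operator `T̃₀ = Σⱼ (μⱼ Lⱼ + conj(μⱼ) Lⱼ*) + V₀ I` on `𝒦̃`. -/
def T0op {n : ℕ} (μv : Fin n → ℂ) (V₀ : ℝ) (L : Fin n → (Kt n →L[ℂ] Kt n)) :
    Kt n →L[ℂ] Kt n :=
  (∑ j, (μv j • L j + (starRingEnd ℂ) (μv j) • ContinuousLinearMap.adjoint (L j)))
    + (V₀ : ℂ) • ContinuousLinearMap.id ℂ (Kt n)

/-- The operator `T = ι* T̃₀ ι` on `𝒦`. -/
def Tops {n : ℕ} (μv : Fin n → ℂ) (V₀ : ℝ) (L : Fin n → (Kt n →L[ℂ] Kt n))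
    (ι : Ks n →L[ℂ] Kt n) : Ks n →L[ℂ] Ks n :=
  ContinuousLinearMap.adjoint ι ∘L T0op μv V₀ L ∘L ι

/-- `e_j` as an element of `ℤⁿ∖{0}`. -/
def eV {n : ℕ} (j : Fin n) : {x : Fin n → ℤ // x ≠ 0} :=
  ⟨Pi.single j 1, by intro h; have := congrFun h j; simp at this⟩

/-- `-e_j` as an element of `ℤⁿ∖{0}`. -/
def eV' {n : ℕ} (j : Fin n) : {x : Fin n → ℤ // x ≠ 0} :=
  ⟨-Pi.single j 1, by intro h; have := congrFun h j; simp at this⟩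

namespace S4
variable {n : ℕ}

/-! ### basic lp lemmas -/

lemma memlp_fin (f : (Fin n → ℤ) → ℂ) (S : Finset (Fin n → ℤ))
    (hS : ∀ x ∉ S, f x = 0) : Memℓp f 2 := by
  apply memℓp_gen
  apply summable_of_ne_finset_zero (s := S)
  intro x hx
  simp [hS x hx]

lemma norm_sq_eq_tsum (f : Kt n) : ‖f‖ ^ 2 = ∑' x, ‖f x‖ ^ 2 := by
  have hp : (0:ℝ) < (2 : ℝ≥0∞).toReal := by norm_num
  have h := lp.norm_rpow_eq_tsum hp f
  simp only [ENNReal.toReal_ofNat] at h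
  have h2 : ∀ y : ℝ, y ^ (2:ℝ) = y ^ (2:ℕ) := fun y => by
    rw [← Real.rpow_natCast y 2]; norm_num
  rw [h2 ‖f‖] at h
  simpa [h2] using h

lemma norm_sq_le_of_support (f : Kt n) (S : Finset (Fin n → ℤ)) (M : ℝ)
    (hS : ∀ x ∉ S, f x = 0) (hb : ∀ x ∈ S, ‖f x‖ ≤ M) :
    ‖f‖ ^ 2 ≤ M ^ 2 * S.card := by
  rw [norm_sq_eq_tsum]
  rw [tsum_eq_sum (s := S) (fun x hx => by simp [hS x hx])]
  calc ∑ x ∈ S, ‖f x‖ ^ 2 ≤ ∑ x ∈ S, M ^ 2 := by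
        apply Finset.sum_le_sum
        intro x hx
        exact pow_le_pow_left₀ (norm_nonneg _) (hb x hx) 2
    _ = M ^ 2 * S.card := by rw [Finset.sum_const, nsmul_eq_mul, mul_comm]

lemma norm_sq_eq_of_support (f : Kt n) (S : Finset (Fin n → ℤ))
    (hS : ∀ x ∉ S, f x = 0) (hb : ∀ x ∈ S, ‖f x‖ = 1) :
    ‖f‖ ^ 2 = S.card := by
  rw [norm_sq_eq_tsum]
  rw [tsum_eq_sum (s := S) (fun x hx => by simp [hS x hx])]
  rw [Finset.sum_congr rfl (fun x hx => by rw [hb x hx, one_pow])]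
  simp

lemma norm_le_of_support (f : Kt n) (S : Finset (Fin n → ℤ)) (M : ℝ) (hM : 0 ≤ M)
    (hS : ∀ x ∉ S, f x = 0) (hb : ∀ x ∈ S, ‖f x‖ ≤ M) :
    ‖f‖ ≤ M * Real.sqrt S.card := by
  have h1 := norm_sq_le_of_support f S M hS hb
  calc ‖f‖ = Real.sqrt (‖f‖ ^ 2) := by rw [Real.sqrt_sq (norm_nonneg f)]
    _ ≤ Real.sqrt (M ^ 2 * S.card) := Real.sqrt_le_sqrt h1
    _ = M * Real.sqrt S.card := by
        rw [Real.sqrt_mul (sq_nonneg M), Real.sqrt_sq hM]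

/-! ### shift operators -/

lemma shift_isometry (A : Kt n →L[ℂ] Kt n) (v : Fin n → ℤ)
    (hA : ∀ (ψ : Kt n) (x : Fin n → ℤ), (A ψ) x = ψ (x + v)) (ψ : Kt n) :
    ‖A ψ‖ = ‖ψ‖ := by
  have h1 : ‖A ψ‖ ^ 2 = ‖ψ‖ ^ 2 := by
    rw [norm_sq_eq_tsum, norm_sq_eq_tsum]
    rw [show (fun x => ‖(A ψ) x‖ ^ 2) = fun x => ‖ψ (x + v)‖ ^ 2 by
      funext x; rw [hA ψ x]]
    exact (Equiv.addRight v).tsum_eq (fun y => ‖ψ y‖ ^ 2)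
  nlinarith [norm_nonneg (A ψ), norm_nonneg ψ, h1]

lemma apply_eq_inner (f : Kt n) (x : Fin n → ℤ) :
    f x = @inner ℂ _ _ (lp.single 2 x (1:ℂ)) f := by
  rw [lp.inner_single_left]
  simp

lemma shift_single (A : Kt n →L[ℂ] Kt n) (v : Fin n → ℤ)
    (hA : ∀ (ψ : Kt n) (x : Fin n → ℤ), (A ψ) x = ψ (x + v)) (x : Fin n → ℤ) :
    A (lp.single 2 x (1:ℂ)) = lp.single 2 (x - v) (1:ℂ) := by
  apply lp.ext
  funext y
  rw [hA]
  rcases eq_or_ne y (x - v) with h | h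
  · subst h
    rw [lp.single_apply_self, sub_add_cancel, lp.single_apply_self]
  · rw [lp.single_apply_ne _ _ _ h, lp.single_apply_ne]
    intro hc
    exact h (by rw [← hc]; ring)

lemma adjoint_shift_apply (A : Kt n →L[ℂ] Kt n) (v : Fin n → ℤ)
    (hA : ∀ (ψ : Kt n) (x : Fin n → ℤ), (A ψ) x = ψ (x + v))
    (ψ : Kt n) (x : Fin n → ℤ) :
    (ContinuousLinearMap.adjoint A ψ) x = ψ (x - v) := by
  rw [apply_eq_inner, ContinuousLinearMap.adjoint_inner_right, shift_single A v hA,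
    ← apply_eq_inner]

/-! ### pointwise description of T0op -/

lemma T0_apply (μv : Fin n → ℂ) (V₀ : ℝ) (L : Fin n → (Kt n →L[ℂ] Kt n))
    (hL : IsShift L) (ψ : Kt n) (x : Fin n → ℤ) :
    (T0op μv V₀ L ψ) x
      = (∑ j, (μv j * ψ (x + Pi.single j 1) + conj (μv j) * ψ (x - Pi.single j 1)))
        + (V₀ : ℂ) * ψ x := by
  have : T0op μv V₀ L ψ
      = (∑ j, (μv j • L j ψ + conj (μv j) • ContinuousLinearMap.adjoint (L j) ψ))
        + (V₀ : ℂ) • ψ := by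
    rw [T0op, ContinuousLinearMap.add_apply, ContinuousLinearMap.sum_apply]
    simp [ContinuousLinearMap.add_apply, ContinuousLinearMap.smul_apply]
    rfl
  rw [this]
  rw [lp.coeFn_add, Pi.add_apply, lp.coeFn_sum, Finset.sum_apply, lp.coeFn_smul, Pi.smul_apply]
  rw [Finset.sum_congr rfl (fun j _ => by
    rw [lp.coeFn_add, Pi.add_apply, lp.coeFn_smul, Pi.smul_apply, lp.coeFn_smul, Pi.smul_apply,
      hL j ψ x, adjoint_shift_apply (L j) (Pi.single j 1) (hL j) ψ x])]
  simp [smul_eq_mul]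

/-! ### self-adjointness and norm bound -/

lemma T0_selfAdjoint (μv : Fin n → ℂ) (V₀ : ℝ) (L : Fin n → (Kt n →L[ℂ] Kt n)) :
    IsSelfAdjoint (T0op μv V₀ L) := by
  unfold IsSelfAdjoint T0op
  rw [star_add, star_sum]
  congr 1
  · apply Finset.sum_congr rfl
    intro j _
    rw [star_add, star_smul, star_smul, ContinuousLinearMap.star_eq_adjoint,
      ContinuousLinearMap.star_eq_adjoint, ContinuousLinearMap.adjoint_adjoint]
    simp [add_comm]
  · rw [star_smul]
    simp [ContinuousLinearMap.star_eq_adjoint, adjoint_id]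

lemma T0_sub_norm_le (μv : Fin n → ℂ) (V₀ : ℝ) (L : Fin n → (Kt n →L[ℂ] Kt n))
    (hL : IsShift L) :
    ‖T0op μv V₀ L - algebraMap ℂ _ (V₀:ℂ)‖ ≤ 2 * ∑ j, ‖μv j‖ := by
  have hid : (algebraMap ℂ (Kt n →L[ℂ] Kt n) (V₀:ℂ)) = (V₀:ℂ) • ContinuousLinearMap.id ℂ (Kt n) := by
    rw [Algebra.algebraMap_eq_smul_one]; rfl
  rw [T0op, hid, add_sub_cancel_right]
  calc ‖∑ j, (μv j • L j + (starRingEnd ℂ) (μv j) • ContinuousLinearMap.adjoint (L j))‖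
      ≤ ∑ j, ‖μv j • L j + (starRingEnd ℂ) (μv j) • ContinuousLinearMap.adjoint (L j)‖ :=
        norm_sum_le _ _
    _ ≤ ∑ j, 2 * ‖μv j‖ := by
        apply Finset.sum_le_sum
        intro j _
        have h1 : ‖L j‖ ≤ 1 := by
          apply ContinuousLinearMap.opNorm_le_bound _ zero_le_one
          intro ψ
          rw [shift_isometry (L j) (Pi.single j 1) (hL j) ψ, one_mul]
        have h2 : ‖ContinuousLinearMap.adjoint (L j)‖ ≤ 1 := by
          rw [ContinuousLinearMap.adjoint.norm_map]; exact h1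
        calc ‖μv j • L j + (starRingEnd ℂ) (μv j) • ContinuousLinearMap.adjoint (L j)‖
            ≤ ‖μv j • L j‖ + ‖(starRingEnd ℂ) (μv j) • ContinuousLinearMap.adjoint (L j)‖ :=
              norm_add_le _ _
          _ ≤ ‖μv j‖ * 1 + ‖μv j‖ * 1 := by
              rw [norm_smul (μv j) (L j),
                norm_smul ((starRingEnd ℂ) (μv j)) (ContinuousLinearMap.adjoint (L j)),
                Complex.norm_conj]
              have := norm_nonneg (μv j)
              nlinarith [h1, h2]
          _ = 2 * ‖μv j‖ := by ring
    _ = 2 * ∑ j, ‖μv j‖ := by rw [Finset.mul_sum]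

instance : Nontrivial (Kt n) := by
  refine ⟨lp.single 2 0 (1:ℂ), 0, fun h => ?_⟩
  have := congrFun (congrArg (fun f : Kt n => (f : (Fin n → ℤ) → ℂ)) h) 0
  simp [lp.single_apply_self] at this

/-! ### plane waves and boxes -/

def pw (θ : Fin n → ℝ) (x : Fin n → ℤ) : ℂ :=
  Complex.exp (((∑ j, θ j * (x j : ℝ)) : ℝ) * Complex.I)

lemma pw_abs (θ : Fin n → ℝ) (x : Fin n → ℤ) : ‖pw θ x‖ = 1 :=
  Complex.norm_exp_ofReal_mul_I _

lemma pw_add (θ : Fin n → ℝ) (x : Fin n → ℤ) (j : Fin n) :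
    pw θ (x + Pi.single j 1) = Complex.exp ((θ j : ℂ) * Complex.I) * pw θ x := by
  rw [pw, pw, ← Complex.exp_add]
  congr 1
  have key : ∀ k, θ k * ((((x + Pi.single j 1 : Fin n → ℤ)) k : ℤ) : ℝ)
      = θ k * ((x k : ℤ) : ℝ) + (if k = j then θ j else 0) := by
    intro k
    rcases eq_or_ne k j with h | h
    · subst h; simp [Pi.single_apply]; ring
    · simp [Pi.single_apply, h]
  have : (∑ k, θ k * ((((x + Pi.single j 1 : Fin n → ℤ)) k : ℤ) : ℝ))
      = θ j + ∑ k, θ k * ((x k : ℤ) : ℝ) := by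
    rw [Finset.sum_congr rfl (fun k _ => key k), Finset.sum_add_distrib]
    simp [Finset.sum_ite_eq']
    ring
  rw [this]
  push_cast
  ring

lemma pw_sub (θ : Fin n → ℝ) (x : Fin n → ℤ) (j : Fin n) :
    pw θ (x - Pi.single j 1) = Complex.exp (-(θ j : ℂ) * Complex.I) * pw θ x := by
  have := pw_add θ (x - Pi.single j 1) j
  rw [sub_add_cancel] at this
  rw [this, ← mul_assoc, ← Complex.exp_add]
  ring_nf
  rw [Complex.exp_zero, one_mul]

def box (N : ℕ) : Finset (Fin n → ℤ) :=
  Fintype.piFinset (fun _ => Finset.Icc (0:ℤ) (N:ℤ))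

lemma mem_box_iff (N : ℕ) (y : Fin n → ℤ) :
    y ∈ box N ↔ ∀ k, 0 ≤ y k ∧ y k ≤ (N:ℤ) := by
  simp [box, Fintype.mem_piFinset, Finset.mem_Icc]

lemma card_box (N : ℕ) : (box (n := n) N).card = (N+1)^n := by
  rw [box, Fintype.card_piFinset]
  simp [Int.card_Icc]

def fN (θ : Fin n → ℝ) (N : ℕ) (x : Fin n → ℤ) : ℂ :=
  if x ∈ box N then pw θ x else 0

lemma fN_abs_le (θ : Fin n → ℝ) (N : ℕ) (x : Fin n → ℤ) :
    ‖fN θ N x‖ ≤ 1 := by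
  rw [fN]; split
  · rw [pw_abs]
  · simp

def ψN (θ : Fin n → ℝ) (N : ℕ) : Kt n :=
  ⟨fN θ N, memlp_fin _ (box N) (fun x hx => by rw [fN, if_neg hx])⟩

lemma ψN_coe (θ : Fin n → ℝ) (N : ℕ) (x : Fin n → ℤ) : (ψN θ N) x = fN θ N x := rfl

lemma ψN_norm_sq (θ : Fin n → ℝ) (N : ℕ) : ‖ψN θ N‖ ^ 2 = ((N+1)^n : ℕ) := by
  rw [← card_box (n := n) N]
  apply norm_sq_eq_of_support
  · intro x hx
    rw [ψN_coe, fN, if_neg hx]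
  · intro x hx
    rw [ψN_coe, fN, if_pos hx, pw_abs]

/-! ### boundary sets -/

def Dp (j : Fin n) (N : ℕ) (a b : ℤ) : Finset (Fin n → ℤ) :=
  Fintype.piFinset (fun k => if k = j then ({a, b} : Finset ℤ) else Finset.Icc 0 (N:ℤ))

lemma card_Dp (j : Fin n) (N : ℕ) (a b : ℤ) (hab : a ≠ b) :
    (Dp j N a b).card = 2 * (N+1)^(n-1) := by
  rw [Dp, Fintype.card_piFinset]
  have h1 : ∀ k : Fin n, ((if k = j then ({a, b} : Finset ℤ) else Finset.Icc 0 (N:ℤ))).card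
      = if k = j then 2 else (N+1) := by
    intro k
    split
    · rw [Finset.card_insert_of_notMem (by simp [hab]), Finset.card_singleton]
    · rw [Int.card_Icc]; omega
  rw [Finset.prod_congr rfl (fun k _ => h1 k)]
  rw [← Finset.mul_prod_erase Finset.univ _ (Finset.mem_univ j), if_pos rfl]
  congr 1
  rw [Finset.prod_congr rfl (fun k hk => if_neg (Finset.mem_erase.1 hk).1),
    Finset.prod_const, Finset.card_erase_of_mem (Finset.mem_univ j), Finset.card_univ,
    Fintype.card_fin]

lemma single_coord (x : Fin n → ℤ) (j k : Fin n) (c : ℤ) :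
    (x + Pi.single j c : Fin n → ℤ) k = x k + if k = j then c else 0 := by
  simp [Pi.single_apply]

lemma boundary_mem_plus (x : Fin n → ℤ) (j : Fin n) (N : ℕ)
    (h : ¬(((x + Pi.single j 1 : Fin n → ℤ) ∈ box N) ↔ x ∈ box N)) :
    x ∈ Dp j N (-1) (N:ℤ) := by
  rw [Dp, Fintype.mem_piFinset]
  rw [mem_box_iff, mem_box_iff] at h
  have hc : ∀ k, (x + Pi.single j 1 : Fin n → ℤ) k = x k + if k = j then 1 else 0 :=
    fun k => single_coord x j k 1
  have hside : ∀ k, k ≠ j → (0 ≤ x k ∧ x k ≤ (N:ℤ)) := by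
    intro k hk
    by_contra hbad
    apply h
    constructor
    · intro hin
      exfalso
      have h1 := hin k
      rw [hc k, if_neg hk] at h1
      exact hbad (by omega)
    · intro hin
      exfalso
      exact hbad (hin k)
  have hxj : x j = -1 ∨ x j = (N:ℤ) := by
    by_contra hbad
    push_neg at hbad
    apply h
    constructor
    · intro hin k
      have h2 := hin j
      rw [hc j, if_pos rfl] at h2
      rcases eq_or_ne k j with rfl | hk
      · omega
      · exact hside k hk
    · intro hin k
      have h2 := hin j
      rw [hc k]
      rcases eq_or_ne k j with rfl | hk
      · rw [if_pos rfl]; omega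
      · rw [if_neg hk]; have := hside k hk; omega
  intro k
  rcases eq_or_ne k j with rfl | hk
  · rw [if_pos rfl]
    simp only [Finset.mem_insert, Finset.mem_singleton]
    exact hxj
  · rw [if_neg hk, Finset.mem_Icc]
    exact hside k hk

lemma boundary_mem_minus (x : Fin n → ℤ) (j : Fin n) (N : ℕ)
    (h : ¬(((x - Pi.single j 1 : Fin n → ℤ) ∈ box N) ↔ x ∈ box N)) :
    x ∈ Dp j N 0 ((N:ℤ)+1) := by
  rw [Dp, Fintype.mem_piFinset]
  rw [mem_box_iff, mem_box_iff] at h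
  have hc : ∀ k, (x - Pi.single j 1 : Fin n → ℤ) k = x k - if k = j then 1 else 0 := by
    intro k; simp [Pi.single_apply]
  have hside : ∀ k, k ≠ j → (0 ≤ x k ∧ x k ≤ (N:ℤ)) := by
    intro k hk
    by_contra hbad
    apply h
    constructor
    · intro hin
      exfalso
      have h1 := hin k
      rw [hc k, if_neg hk] at h1
      exact hbad (by omega)
    · intro hin
      exfalso
      exact hbad (hin k)
  have hxj : x j = 0 ∨ x j = (N:ℤ)+1 := by
    by_contra hbad
    push_neg at hbad
    apply h
    constructor
    · intro hin k
      have h2 := hin j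
      rw [hc j, if_pos rfl] at h2
      rcases eq_or_ne k j with rfl | hk
      · omega
      · exact hside k hk
    · intro hin k
      have h2 := hin j
      rw [hc k]
      rcases eq_or_ne k j with rfl | hk
      · rw [if_pos rfl]; omega
      · rw [if_neg hk]; have := hside k hk; omega
  intro k
  rcases eq_or_ne k j with rfl | hk
  · rw [if_pos rfl]
    simp only [Finset.mem_insert, Finset.mem_singleton]
    exact hxj
  · rw [if_neg hk, Finset.mem_Icc]
    exact hside k hk

/-! ### error vectors -/

/-- forward error function -/
def uu (μv : Fin n → ℂ) (θ : Fin n → ℝ) (N : ℕ) (j : Fin n) (x : Fin n → ℤ) : ℂ :=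
  μv j * (fN θ N (x + Pi.single j 1) - Complex.exp ((θ j : ℂ) * Complex.I) * fN θ N x)

/-- backward error function -/
def ww (μv : Fin n → ℂ) (θ : Fin n → ℝ) (N : ℕ) (j : Fin n) (x : Fin n → ℤ) : ℂ :=
  conj (μv j) * (fN θ N (x - Pi.single j 1) - Complex.exp (-(θ j : ℂ) * Complex.I) * fN θ N x)

lemma uu_support (μv : Fin n → ℂ) (θ : Fin n → ℝ) (N : ℕ) (j : Fin n)
    (x : Fin n → ℤ) (hx : x ∉ Dp j N (-1) (N:ℤ)) : uu μv θ N j x = 0 := by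
  by_cases hiff : (((x + Pi.single j 1 : Fin n → ℤ) ∈ box N) ↔ x ∈ box N)
  · rw [uu]
    by_cases hxx : x ∈ box N
    · rw [fN, if_pos (hiff.2 hxx), fN, if_pos hxx, pw_add, sub_self, mul_zero]
    · rw [fN, if_neg (fun hc => hxx (hiff.1 hc)), fN, if_neg hxx, mul_zero, sub_zero, mul_zero]
  · exact absurd (boundary_mem_plus x j N hiff) hx

lemma ww_support (μv : Fin n → ℂ) (θ : Fin n → ℝ) (N : ℕ) (j : Fin n)
    (x : Fin n → ℤ) (hx : x ∉ Dp j N 0 ((N:ℤ)+1)) : ww μv θ N j x = 0 := by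
  by_cases hiff : (((x - Pi.single j 1 : Fin n → ℤ) ∈ box N) ↔ x ∈ box N)
  · rw [ww]
    by_cases hxx : x ∈ box N
    · rw [fN, if_pos (hiff.2 hxx), fN, if_pos hxx, pw_sub, sub_self, mul_zero]
    · rw [fN, if_neg (fun hc => hxx (hiff.1 hc)), fN, if_neg hxx, mul_zero, sub_zero, mul_zero]
  · exact absurd (boundary_mem_minus x j N hiff) hx

lemma uu_bound (μv : Fin n → ℂ) (θ : Fin n → ℝ) (N : ℕ) (j : Fin n) (x : Fin n → ℤ) :
    ‖uu μv θ N j x‖ ≤ 2 * ‖μv j‖ := by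
  rw [uu, norm_mul]
  have h1 : ‖fN θ N (x + Pi.single j 1) - Complex.exp ((θ j : ℂ) * Complex.I) * fN θ N x‖
      ≤ 2 := by
    calc ‖fN θ N (x + Pi.single j 1) - Complex.exp ((θ j : ℂ) * Complex.I) * fN θ N x‖
        ≤ ‖fN θ N (x + Pi.single j 1)‖
          + ‖Complex.exp ((θ j : ℂ) * Complex.I) * fN θ N x‖ := by
          exact (norm_sub_le _ _)
      _ ≤ 1 + 1 := by
          gcongr
          · exact fN_abs_le θ N _
          · rw [norm_mul, Complex.norm_exp_ofReal_mul_I, one_mul]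
            exact fN_abs_le θ N x
      _ = 2 := by norm_num
  calc ‖μv j‖ * ‖fN θ N (x + Pi.single j 1) - Complex.exp ((θ j : ℂ) * Complex.I) * fN θ N x‖
      ≤ ‖μv j‖ * 2 := by
        exact mul_le_mul_of_nonneg_left h1 (norm_nonneg _)
    _ = 2 * ‖μv j‖ := by ring

lemma ww_bound (μv : Fin n → ℂ) (θ : Fin n → ℝ) (N : ℕ) (j : Fin n) (x : Fin n → ℤ) :
    ‖ww μv θ N j x‖ ≤ 2 * ‖μv j‖ := by
  rw [ww, norm_mul, Complex.norm_conj]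
  have habs : ‖Complex.exp (-(θ j : ℂ) * Complex.I)‖ = 1 := by
    rw [show (-(θ j : ℂ)) = ((-θ j : ℝ) : ℂ) by push_cast; ring]
    exact Complex.norm_exp_ofReal_mul_I _
  have h1 : ‖fN θ N (x - Pi.single j 1) - Complex.exp (-(θ j : ℂ) * Complex.I) * fN θ N x‖
      ≤ 2 := by
    calc ‖fN θ N (x - Pi.single j 1) - Complex.exp (-(θ j : ℂ) * Complex.I) * fN θ N x‖
        ≤ ‖fN θ N (x - Pi.single j 1)‖
          + ‖Complex.exp (-(θ j : ℂ) * Complex.I) * fN θ N x‖ :=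
          norm_sub_le _ _
      _ ≤ 1 + 1 := by
          gcongr
          · exact fN_abs_le θ N _
          · rw [norm_mul, habs, one_mul]
            exact fN_abs_le θ N x
      _ = 2 := by norm_num
  calc ‖μv j‖ * ‖fN θ N (x - Pi.single j 1) - Complex.exp (-(θ j : ℂ) * Complex.I) * fN θ N x‖
      ≤ ‖μv j‖ * 2 :=
        mul_le_mul_of_nonneg_left h1 (norm_nonneg _)
    _ = 2 * ‖μv j‖ := by ring

def Uvec (μv : Fin n → ℂ) (θ : Fin n → ℝ) (N : ℕ) (j : Fin n) : Kt n :=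
  ⟨uu μv θ N j, memlp_fin _ (Dp j N (-1) (N:ℤ)) (uu_support μv θ N j)⟩

def Wvec (μv : Fin n → ℂ) (θ : Fin n → ℝ) (N : ℕ) (j : Fin n) : Kt n :=
  ⟨ww μv θ N j, memlp_fin _ (Dp j N 0 ((N:ℤ)+1)) (ww_support μv θ N j)⟩

lemma Uvec_norm (μv : Fin n → ℂ) (θ : Fin n → ℝ) (N : ℕ) (j : Fin n) :
    ‖Uvec μv θ N j‖ ≤ 2 * ‖μv j‖ * Real.sqrt (2 * (N+1)^(n-1)) := by
  have := norm_le_of_support (Uvec μv θ N j) (Dp j N (-1) (N:ℤ)) (2 * ‖μv j‖)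
    (by positivity) (uu_support μv θ N j) (fun x _ => uu_bound μv θ N j x)
  rwa [card_Dp j N (-1) (N:ℤ) (by omega), Nat.cast_mul, Nat.cast_ofNat, Nat.cast_pow,
    Nat.cast_add, Nat.cast_one] at this

lemma Wvec_norm (μv : Fin n → ℂ) (θ : Fin n → ℝ) (N : ℕ) (j : Fin n) :
    ‖Wvec μv θ N j‖ ≤ 2 * ‖μv j‖ * Real.sqrt (2 * (N+1)^(n-1)) := by
  have := norm_le_of_support (Wvec μv θ N j) (Dp j N 0 ((N:ℤ)+1)) (2 * ‖μv j‖)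
    (by positivity) (ww_support μv θ N j) (fun x _ => ww_bound μv θ N j x)
  rwa [card_Dp j N 0 ((N:ℤ)+1) (by omega), Nat.cast_mul, Nat.cast_ofNat, Nat.cast_pow,
    Nat.cast_add, Nat.cast_one] at this

/-! ### phase algebra -/

lemma key_phase (z : ℂ) (β : ℝ) :
    z * Complex.exp (((β - z.arg : ℝ) : ℂ) * Complex.I)
      = (‖z‖ : ℂ) * Complex.exp ((β : ℂ) * Complex.I) := by
  set a := z.arg with ha
  conv_lhs => rw [← Complex.norm_mul_exp_arg_mul_I z]
  rw [mul_assoc, ← Complex.exp_add]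
  congr 2
  rw [← ha]
  push_cast
  ring

lemma phase_sum (μv : Fin n → ℂ) (β : ℝ) :
    (∑ j, (μv j * Complex.exp ((((β - (μv j).arg : ℝ)) : ℂ) * Complex.I)
      + conj (μv j) * Complex.exp (-(((β - (μv j).arg : ℝ)) : ℂ) * Complex.I)))
    = (((2 * ∑ j, ‖μv j‖) * Real.cos β : ℝ) : ℂ) := by
  have hterm : ∀ j, μv j * Complex.exp ((((β - (μv j).arg : ℝ)) : ℂ) * Complex.I)
      + conj (μv j) * Complex.exp (-(((β - (μv j).arg : ℝ)) : ℂ) * Complex.I)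
      = ((2 * ‖μv j‖ * Real.cos β : ℝ) : ℂ) := by
    intro j
    have h1 := key_phase (μv j) β
    have h2 : conj (μv j) * Complex.exp (-(((β - (μv j).arg : ℝ)) : ℂ) * Complex.I)
        = conj (μv j * Complex.exp ((((β - (μv j).arg : ℝ)) : ℂ) * Complex.I)) := by
      rw [map_mul]
      congr 1
      rw [← Complex.exp_conj]
      congr 1
      rw [map_mul, Complex.conj_I, Complex.conj_ofReal]
      ring
    rw [h1, h2, h1, map_mul]
    rw [Complex.conj_ofReal]
    have h3 : conj (Complex.exp ((β : ℂ) * Complex.I)) = Complex.exp (-(β:ℂ) * Complex.I) := by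
      rw [← Complex.exp_conj, map_mul, Complex.conj_I, Complex.conj_ofReal]
      ring_nf
    rw [h3]
    rw [Complex.exp_mul_I, Complex.exp_mul_I]
    rw [Complex.cos_neg, Complex.sin_neg]
    push_cast [Complex.ofReal_cos]
    ring
  rw [Finset.sum_congr rfl (fun j _ => hterm j)]
  have hr : ((2 * ∑ j, ‖μv j‖) * Real.cos β : ℝ)
      = ∑ j, 2 * ‖μv j‖ * Real.cos β := by
    rw [Finset.mul_sum, Finset.sum_mul]
  rw [hr, Complex.ofReal_sum]

/-! ### the error identity -/

lemma err_eq (μv : Fin n → ℂ) (V₀ : ℝ) (L : Fin n → (Kt n →L[ℂ] Kt n)) (hL : IsShift L)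
    (β : ℝ) (N : ℕ) (t : ℝ)
    (ht : (t : ℂ) = (V₀ : ℂ) + (((2 * ∑ j, ‖μv j‖) * Real.cos β : ℝ) : ℂ)) :
    T0op μv V₀ L (ψN (fun j => β - (μv j).arg) N) - (t : ℂ) • ψN (fun j => β - (μv j).arg) N
      = ∑ j, (Uvec μv (fun j => β - (μv j).arg) N j + Wvec μv (fun j => β - (μv j).arg) N j) := by
  set θ : Fin n → ℝ := fun j => β - (μv j).arg with hθ
  apply lp.ext
  funext x
  rw [lp.coeFn_sub, Pi.sub_apply, lp.coeFn_smul, Pi.smul_apply]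
  rw [lp.coeFn_sum, Finset.sum_apply]
  rw [T0_apply μv V₀ L hL _ x]
  have hsum : ∀ j : Fin n,
      ((Uvec μv θ N j + Wvec μv θ N j) : Kt n) x = uu μv θ N j x + ww μv θ N j x := by
    intro j
    rw [lp.coeFn_add, Pi.add_apply]
    rfl
  rw [Finset.sum_congr rfl (fun j _ => hsum j)]
  simp only [ψN_coe, smul_eq_mul]
  have hphase := phase_sum μv β
  rw [hθ]
  simp only [uu, ww]
  have expand : ∀ j : Fin n,
      μv j * (fN θ N (x + Pi.single j 1) - Complex.exp ((θ j : ℂ) * Complex.I) * fN θ N x)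
      + conj (μv j) * (fN θ N (x - Pi.single j 1) - Complex.exp (-(θ j : ℂ) * Complex.I) * fN θ N x)
      = (μv j * fN θ N (x + Pi.single j 1) + conj (μv j) * fN θ N (x - Pi.single j 1))
        - (μv j * Complex.exp ((θ j : ℂ) * Complex.I)
            + conj (μv j) * Complex.exp (-(θ j : ℂ) * Complex.I)) * fN θ N x := by
    intro j; ring
  rw [Finset.sum_congr rfl (fun j _ => expand j), Finset.sum_sub_distrib, ← Finset.sum_mul]
  have : (∑ j, (μv j * Complex.exp ((θ j : ℂ) * Complex.I)
      + conj (μv j) * Complex.exp (-(θ j : ℂ) * Complex.I)))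
      = (((2 * ∑ j, ‖μv j‖) * Real.cos β : ℝ) : ℂ) := by
    rw [hθ] at *
    convert hphase using 3
  rw [this, ht]
  ring

/-! ### the hard inclusion -/

lemma mem_spectrum_of_mem_Icc (hn : 1 ≤ n) (μv : Fin n → ℂ) (V₀ : ℝ)
    (hμ : (∑ j, ‖μv j‖) ≠ 0)
    (L : Fin n → (Kt n →L[ℂ] Kt n)) (hL : IsShift L) (t : ℝ)
    (ht : t ∈ Set.Icc (V₀ - 2 * ∑ j, ‖μv j‖) (V₀ + 2 * ∑ j, ‖μv j‖)) :
    (t : ℂ) ∈ spectrum ℂ (T0op μv V₀ L) := by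
  set μ : ℝ := ∑ j, ‖μv j‖ with hμdef
  have hμ0 : 0 ≤ μ := Finset.sum_nonneg (fun j _ => norm_nonneg _)
  have hμpos : 0 < μ := lt_of_le_of_ne hμ0 (Ne.symm hμ)
  set c : ℝ := (t - V₀) / (2 * μ) with hcdef
  have hc1 : -1 ≤ c := by
    rw [hcdef, le_div_iff₀ (by linarith)]
    obtain ⟨h1, h2⟩ := ht
    linarith
  have hc2 : c ≤ 1 := by
    rw [hcdef, div_le_one (by linarith)]
    obtain ⟨h1, h2⟩ := ht
    linarith
  set β : ℝ := Real.arccos c with hβdef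
  have hcos : Real.cos β = c := Real.cos_arccos hc1 hc2
  have hreal : V₀ + (2 * μ) * Real.cos β = t := by
    rw [hcos, hcdef]
    field_simp
    ring
  have htc : (t : ℂ) = (V₀ : ℂ) + (((2 * μ) * Real.cos β : ℝ) : ℂ) := by
    rw [← hreal]
    push_cast
    ring
  by_contra hts
  rw [spectrum.notMem_iff] at hts
  obtain ⟨u, hu⟩ := hts
  set B : Kt n →L[ℂ] Kt n := ↑u⁻¹ with hBdef
  set θ : Fin n → ℝ := fun j => β - (μv j).arg with hθdef
  set C : ℝ := ‖B‖ * (4 * μ * Real.sqrt 2) with hCdef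
  have hC0 : 0 ≤ C := by positivity
  obtain ⟨N, hN⟩ := exists_nat_gt (C ^ 2)
  -- the approximate eigenvector
  set ψ : Kt n := ψN θ N with hψdef
  have herr := err_eq μv V₀ L hL β N t htc
  have hψnormsq : ‖ψ‖ ^ 2 = (((N+1)^n : ℕ) : ℝ) := ψN_norm_sq θ N
  have hψnorm : ‖ψ‖ = Real.sqrt (((N:ℝ)+1)^(n-1)) * Real.sqrt ((N:ℝ)+1) := by
    rw [← Real.sqrt_mul (by positivity), ← pow_succ]
    have : n - 1 + 1 = n := Nat.succ_pred_eq_of_pos hn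
    rw [this, ← Real.sqrt_sq (norm_nonneg ψ), hψnormsq]
    congr 1
    push_cast
    ring
  -- bound the error
  have herrbound : ‖T0op μv V₀ L ψ - (t:ℂ) • ψ‖ ≤ 4 * μ * Real.sqrt (2 * ((N:ℝ)+1)^(n-1)) := by
    rw [hψdef, herr]
    calc ‖∑ j, (Uvec μv θ N j + Wvec μv θ N j)‖
        ≤ ∑ j, ‖Uvec μv θ N j + Wvec μv θ N j‖ := norm_sum_le _ _
      _ ≤ ∑ j, 4 * ‖μv j‖ * Real.sqrt (2 * ((N:ℝ)+1)^(n-1)) := by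
          apply Finset.sum_le_sum
          intro j _
          calc ‖Uvec μv θ N j + Wvec μv θ N j‖
              ≤ ‖Uvec μv θ N j‖ + ‖Wvec μv θ N j‖ := norm_add_le _ _
            _ ≤ 2 * ‖μv j‖ * Real.sqrt (2 * ((N:ℝ)+1)^(n-1))
                + 2 * ‖μv j‖ * Real.sqrt (2 * ((N:ℝ)+1)^(n-1)) :=
                add_le_add (Uvec_norm μv θ N j) (Wvec_norm μv θ N j)
            _ = 4 * ‖μv j‖ * Real.sqrt (2 * ((N:ℝ)+1)^(n-1)) := by ring
      _ = 4 * μ * Real.sqrt (2 * ((N:ℝ)+1)^(n-1)) := by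
          rw [hμdef, ← Finset.sum_mul, ← Finset.mul_sum]
  -- invertibility gives a lower bound
  have hinv : ψ = B ((algebraMap ℂ (Kt n →L[ℂ] Kt n) (t:ℂ) - T0op μv V₀ L) ψ) := by
    have h1 : B * (algebraMap ℂ (Kt n →L[ℂ] Kt n) (t:ℂ) - T0op μv V₀ L) = 1 := by
      rw [← hu, hBdef]
      exact u.inv_mul
    calc ψ = (1 : Kt n →L[ℂ] Kt n) ψ := rfl
      _ = (B * (algebraMap ℂ (Kt n →L[ℂ] Kt n) (t:ℂ) - T0op μv V₀ L)) ψ := by rw [h1]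
      _ = B ((algebraMap ℂ (Kt n →L[ℂ] Kt n) (t:ℂ) - T0op μv V₀ L) ψ) := rfl
  have happ : (algebraMap ℂ (Kt n →L[ℂ] Kt n) (t:ℂ) - T0op μv V₀ L) ψ
      = (t:ℂ) • ψ - T0op μv V₀ L ψ := by
    rw [ContinuousLinearMap.sub_apply, Algebra.algebraMap_eq_smul_one,
      ContinuousLinearMap.smul_apply, ContinuousLinearMap.one_apply]
  have hlow : ‖ψ‖ ≤ ‖B‖ * ‖T0op μv V₀ L ψ - (t:ℂ) • ψ‖ := by
    conv_lhs => rw [hinv]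
    calc ‖B ((algebraMap ℂ (Kt n →L[ℂ] Kt n) (t:ℂ) - T0op μv V₀ L) ψ)‖
        ≤ ‖B‖ * ‖(algebraMap ℂ (Kt n →L[ℂ] Kt n) (t:ℂ) - T0op μv V₀ L) ψ‖ :=
          B.le_opNorm _
      _ = ‖B‖ * ‖T0op μv V₀ L ψ - (t:ℂ) • ψ‖ := by rw [happ, norm_sub_rev]
  -- combine
  have hfinal : Real.sqrt (((N:ℝ)+1)^(n-1)) * Real.sqrt ((N:ℝ)+1)
      ≤ C * Real.sqrt (((N:ℝ)+1)^(n-1)) := by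
    rw [← hψnorm]
    calc ‖ψ‖ ≤ ‖B‖ * ‖T0op μv V₀ L ψ - (t:ℂ) • ψ‖ := hlow
      _ ≤ ‖B‖ * (4 * μ * Real.sqrt (2 * ((N:ℝ)+1)^(n-1))) := by
          apply mul_le_mul_of_nonneg_left herrbound (norm_nonneg B)
      _ = C * Real.sqrt (((N:ℝ)+1)^(n-1)) := by
          rw [hCdef, Real.sqrt_mul (by norm_num)]
          ring
  have hpos : 0 < Real.sqrt (((N:ℝ)+1)^(n-1)) := Real.sqrt_pos.2 (by positivity)
  have hsqrtle : Real.sqrt ((N:ℝ)+1) ≤ C := by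
    have := hfinal
    rw [mul_comm (Real.sqrt (((N:ℝ)+1)^(n-1)))] at this
    exact le_of_mul_le_mul_right this hpos
  have hgt : C < Real.sqrt ((N:ℝ)+1) := by
    rw [Real.lt_sqrt hC0]
    calc C ^ 2 < (N:ℝ) := hN
      _ < (N:ℝ) + 1 := by linarith
  linarith

end S4

/-- if `μ ≠ 0` then `σ(T̃₀) = [V₀ - 2μ, V₀ + 2μ]`. -/
theorem stmt_4 (n : ℕ) (hn : 1 ≤ n) (μv : Fin n → ℂ) (V₀ : ℝ)
    (hμ : (∑ j, ‖μv j‖) ≠ 0)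
    (L : Fin n → (Kt n →L[ℂ] Kt n)) (hL : IsShift L) :
    spectrum ℂ (T0op μv V₀ L) =
      (fun t : ℝ => (t : ℂ)) ''
        Set.Icc (V₀ - 2 * ∑ j, ‖μv j‖) (V₀ + 2 * ∑ j, ‖μv j‖) := by
  apply Set.eq_of_subset_of_subset
  · intro z hz
    have hsa := S4.T0_selfAdjoint μv V₀ L
    have hre : z = z.re := hsa.mem_spectrum_eq_re hz
    have hz2 : z - (V₀:ℂ) ∈ spectrum ℂ (T0op μv V₀ L - algebraMap ℂ _ (V₀:ℂ)) := by
      rw [← spectrum.sub_singleton_eq]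
      exact Set.sub_mem_sub hz rfl
    have hnorm := spectrum.norm_le_norm_of_mem hz2
    have hb := S4.T0_sub_norm_le μv V₀ L hL
    have hkey : ‖z - (V₀:ℂ)‖ ≤ 2 * ∑ j, ‖μv j‖ := le_trans hnorm hb
    refine ⟨z.re, ?_, hre.symm⟩
    rw [hre] at hkey
    rw [show ((z.re:ℂ) - (V₀:ℂ)) = ((z.re - V₀ : ℝ):ℂ) by push_cast; ring] at hkey
    rw [Complex.norm_real, Real.norm_eq_abs, abs_le] at hkey
    constructor <;> linarith [hkey.1, hkey.2]
  · rintro z ⟨t, ht, rfl⟩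
    exact S4.mem_spectrum_of_mem_Icc hn μv V₀ hμ L hL t ht
end
end

section
/- Assume μ ≠ 0 and let λ ∈ [V₀ − 2μ, V₀ + 2μ]. Then there exists a sequence (φ_m) in 𝒦 such that ‖φ_m‖ = 1 for all m, ⟨φ, φ_m⟩ → 0 as m → ∞ for every φ ∈ 𝒦 (weak convergence to 0), and ‖(T − λ)φ_m‖ → 0 as m → ∞. -/
open MeasureTheory Filter Topology ComplexConjugate ContinuousLinearMap
open scoped ENNReal Real

noncomputable section

section aux
variable {n : ℕ}

/-- delta in Kt -/
def dT (x : Fin n → ℤ) : Kt n := lp.single 2 x 1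

/-- delta in Ks, zero at origin -/
def dK (x : Fin n → ℤ) : Ks n := if h : x = 0 then 0 else lp.single 2 (⟨x, h⟩ : {x : Fin n → ℤ // x ≠ 0}) 1

lemma dT_apply (x y : Fin n → ℤ) : (dT x) y = if y = x then 1 else 0 := by
  rw [dT, lp.single_apply, Pi.single_apply]

lemma dK_apply (x : Fin n → ℤ) (v : {x : Fin n → ℤ // x ≠ 0}) :
    (dK x) v = if (v : Fin n → ℤ) = x then 1 else 0 := by
  by_cases hx : x = 0
  · subst hx
    rw [dK, dif_pos rfl, if_neg v.2]
    rfl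
  · rw [dK, dif_neg hx]
    by_cases hv : (v : Fin n → ℤ) = x
    · have hv2 : v = ⟨x, hx⟩ := Subtype.ext hv
      rw [if_pos hv, hv2, lp.single_apply_self]
    · rw [if_neg hv, lp.single_apply_ne]
      exact fun hc => hv (by rw [hc])

lemma inner_dT_left (x : Fin n → ℤ) (f : Kt n) : (inner ℂ (dT x) f : ℂ) = f x := by
  rw [dT, lp.inner_single_left]; simp

lemma inner_dK_left (x : Fin n → ℤ) (hx : x ≠ 0) (f : Ks n) :
    (inner ℂ (dK x) f : ℂ) = f ⟨x, hx⟩ := by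
  rw [dK, dif_neg hx, lp.inner_single_left]; simp

lemma inner_dK_dK (x y : Fin n → ℤ) (hx : x ≠ 0) :
    (inner ℂ (dK x) (dK y) : ℂ) = if x = y then 1 else 0 := by
  rw [inner_dK_left x hx, dK_apply]

end aux

section ops
variable {n : ℕ} {L : Fin n → (Kt n →L[ℂ] Kt n)} {ι : Ks n →L[ℂ] Kt n}

lemma L_dT (hL : IsShift L) (j : Fin n) (x : Fin n → ℤ) :
    L j (dT x) = dT (x - Pi.single j 1) := by
  apply lp.ext; funext y
  rw [hL j (dT x) y, dT_apply, dT_apply]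
  simp [eq_sub_iff_add_eq]

lemma Ladj_dT (hL : IsShift L) (j : Fin n) (x : Fin n → ℤ) :
    ContinuousLinearMap.adjoint (L j) (dT x) = dT (x + Pi.single j 1) := by
  apply ext_inner_right ℂ; intro ψ
  rw [ContinuousLinearMap.adjoint_inner_left, inner_dT_left, inner_dT_left, hL]

lemma iota_dK (hι : IsIota ι) (x : Fin n → ℤ) (hx : x ≠ 0) : ι (dK x) = dT x := by
  apply lp.ext; funext y
  rw [hι (dK x) y, dT_apply]
  by_cases hy : y = 0
  · rw [dif_pos hy, if_neg (by rw [hy]; exact fun hc => hx hc.symm)]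
  · rw [dif_neg hy, dK_apply]

lemma iotaAdj_dT (hι : IsIota ι) (x : Fin n → ℤ) :
    ContinuousLinearMap.adjoint ι (dT x) = dK x := by
  apply ext_inner_right ℂ; intro ψ
  rw [ContinuousLinearMap.adjoint_inner_left, inner_dT_left, hι]
  by_cases hx : x = 0
  · rw [dif_pos hx, hx, dK, dif_pos rfl, inner_zero_left]
  · rw [dif_neg hx, inner_dK_left x hx]

lemma Tops_dK (μv : Fin n → ℂ) (V₀ : ℝ) (hL : IsShift L) (hι : IsIota ι)
    (x : Fin n → ℤ) (hx : x ≠ 0) :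
    Tops μv V₀ L ι (dK x) =
      (∑ j, (μv j • dK (x - Pi.single j 1)
        + (starRingEnd ℂ) (μv j) • dK (x + Pi.single j 1))) + (V₀ : ℂ) • dK x := by
  simp only [Tops, ContinuousLinearMap.comp_apply, iota_dK hι x hx, T0op,
    ContinuousLinearMap.add_apply, ContinuousLinearMap.sum_apply,
    ContinuousLinearMap.smul_apply, ContinuousLinearMap.id_apply,
    map_add, map_sum, _root_.map_smul, L_dT hL, Ladj_dT hL, iotaAdj_dT hι]

end ops

section phi
variable {n : ℕ}

/-- finite linear combination of deltas in Ks -/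
def Phi (a : (Fin n → ℤ) → ℂ) (s : Finset (Fin n → ℤ)) : Ks n := ∑ x ∈ s, a x • dK x

lemma inner_Phi_Phi (a b : (Fin n → ℤ) → ℂ) (s : Finset (Fin n → ℤ))
    (hs : ∀ x ∈ s, x ≠ 0) :
    (inner ℂ (Phi a s) (Phi b s) : ℂ) = ∑ x ∈ s, (starRingEnd ℂ) (a x) * b x := by
  classical
  rw [Phi, Phi, sum_inner]
  refine Finset.sum_congr rfl fun x hx => ?_
  rw [inner_sum]
  have h : ∀ y ∈ s, (inner ℂ (a x • dK x) (b y • dK y) : ℂ)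
      = if y = x then (starRingEnd ℂ) (a x) * b y else 0 := by
    intro y hy
    rw [inner_smul_left, inner_smul_right, inner_dK_dK x y (hs x hx)]
    by_cases h : y = x
    · rw [if_pos h, if_pos h.symm]; ring
    · rw [if_neg h, if_neg (fun hc => h hc.symm)]; ring
  rw [Finset.sum_congr rfl h, Finset.sum_ite_eq' s x (fun y => (starRingEnd ℂ) (a x) * b y),
    if_pos hx]

lemma norm_Phi_sq (a : (Fin n → ℤ) → ℂ) (s : Finset (Fin n → ℤ))
    (hs : ∀ x ∈ s, x ≠ 0) : ‖Phi a s‖ ^ 2 = ∑ x ∈ s, ‖a x‖ ^ 2 := by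
  have h := inner_Phi_Phi a a s hs
  have h2 := @inner_self_eq_norm_sq ℂ _ _ _ _ (Phi a s)
  rw [← h2, h, map_sum]
  refine Finset.sum_congr rfl fun x _ => ?_
  rw [mul_comm, Complex.mul_conj]
  simp [RCLike.re_to_complex, Complex.normSq_eq_norm_sq,
    ← Complex.ofReal_pow]

lemma norm_Phi_eq (a : (Fin n → ℤ) → ℂ) (s : Finset (Fin n → ℤ))
    (hs : ∀ x ∈ s, x ≠ 0) (ha : ∀ x ∈ s, ‖a x‖ = 1) :
    ‖Phi a s‖ = Real.sqrt s.card := by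
  have h := norm_Phi_sq a s hs
  have h2 : ∑ x ∈ s, ‖a x‖ ^ 2 = (s.card : ℝ) := by
    rw [Finset.sum_congr rfl fun x hx => by rw [ha x hx, one_pow], Finset.sum_const,
      nsmul_eq_mul, mul_one]
  rw [← Real.sqrt_sq (norm_nonneg (Phi a s)), h, h2]

lemma norm_Phi_le (a : (Fin n → ℤ) → ℂ) (s : Finset (Fin n → ℤ))
    (hs : ∀ x ∈ s, x ≠ 0) (ha : ∀ x ∈ s, ‖a x‖ = 1) (N : ℕ) (hcard : s.card ≤ N) :
    ‖Phi a s‖ ≤ Real.sqrt N := by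
  rw [norm_Phi_eq a s hs ha]
  exact Real.sqrt_le_sqrt (by exact_mod_cast hcard)

lemma inner_left_Phi (φ : Ks n) (a : (Fin n → ℤ) → ℂ) (s : Finset (Fin n → ℤ)) :
    (inner ℂ φ (Phi a s) : ℂ)
      = ∑ x ∈ s, a x * (starRingEnd ℂ) (if h : x = 0 then 0 else φ ⟨x, h⟩) := by
  rw [Phi, inner_sum]
  refine Finset.sum_congr rfl fun x _ => ?_
  rw [inner_smul_right]
  congr 1
  rw [← inner_conj_symm]
  by_cases hx : x = 0
  · rw [dif_pos hx, dK, dif_pos hx, inner_zero_left, map_zero]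
  · rw [dif_neg hx, inner_dK_left x hx]

lemma Phi_diff (a : (Fin n → ℤ) → ℂ) (s t : Finset (Fin n → ℤ)) :
    Phi a s - Phi a t = Phi a (s \ t) - Phi a (t \ s) := by
  classical
  have h1 : Phi a s = Phi a (s \ t) + Phi a (s ∩ t) := by
    rw [Phi, Phi, Phi, ← Finset.sum_union (Finset.disjoint_sdiff_inter s t),
      Finset.sdiff_union_inter]
  have h2 : Phi a t = Phi a (t \ s) + Phi a (t ∩ s) := by
    rw [Phi, Phi, Phi, ← Finset.sum_union (Finset.disjoint_sdiff_inter t s),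
      Finset.sdiff_union_inter]
  rw [h1, h2, Finset.inter_comm]
  abel

end phi

section cf
variable {n : ℕ} {z : Fin n → ℂ}

/-- plane wave coefficients -/
def cf (z : Fin n → ℂ) (x : Fin n → ℤ) : ℂ := ∏ j, z j ^ (x j)

lemma cf_norm (hz : ∀ j, ‖z j‖ = 1) (x : Fin n → ℤ) : ‖cf z x‖ = 1 := by
  rw [cf, norm_prod]
  rw [Finset.prod_congr rfl fun j _ => by rw [norm_zpow, hz j, one_zpow]]
  exact Finset.prod_const_one

lemma cf_add (hz : ∀ j, ‖z j‖ = 1) (x : Fin n → ℤ) (j : Fin n) :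
    cf z (x + Pi.single j 1) = cf z x * z j := by
  have hz0 : ∀ j', z j' ≠ 0 := fun j' h => by simpa [h] using hz j'
  rw [cf, cf]
  have step : ∀ j' : Fin n, z j' ^ ((x + Pi.single j 1 : Fin n → ℤ) j') = z j' ^ (x j') * z j' ^ ((Pi.single j 1 : Fin n → ℤ) j') := by
    intro j'
    rw [Pi.add_apply, zpow_add₀ (hz0 j')]
  rw [Finset.prod_congr rfl fun j' _ => step j', Finset.prod_mul_distrib]
  congr 1
  rw [Finset.prod_eq_single j (fun b _ hb => by rw [Pi.single_eq_of_ne hb, zpow_zero])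
    (fun h => absurd (Finset.mem_univ j) h)]
  rw [Pi.single_eq_same, zpow_one]

lemma cf_sub (hz : ∀ j, ‖z j‖ = 1) (x : Fin n → ℤ) (j : Fin n) :
    cf z (x - Pi.single j 1) = cf z x * (z j)⁻¹ := by
  have h := cf_add hz (x - Pi.single j 1) j
  rw [sub_add_cancel] at h
  have hz0 : z j ≠ 0 := fun hh => by simpa [hh] using hz j
  field_simp [h]
  linear_combination -h

lemma conj_z_mul (hz1 : ‖(zc : ℂ)‖ = 1) : (starRingEnd ℂ) zc * zc = 1 := by
  rw [mul_comm, Complex.mul_conj]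
  norm_cast
  rw [Complex.normSq_eq_norm_sq, hz1, one_pow]

section topsphi
variable {n : ℕ} {L : Fin n → (Kt n →L[ℂ] Kt n)} {ι : Ks n →L[ℂ] Kt n}

lemma Tops_Phi (μv : Fin n → ℂ) (V₀ : ℝ) (hL : IsShift L) (hι : IsIota ι)
    (z : Fin n → ℂ) (hz : ∀ j, ‖z j‖ = 1)
    (s : Finset (Fin n → ℤ)) (hs : ∀ x ∈ s, x ≠ 0) :
    Tops μv V₀ L ι (Phi (cf z) s) =
      (V₀ : ℂ) • Phi (cf z) s
      + ∑ j, ((μv j * z j) • Phi (cf z) (s.image (fun x => x - Pi.single j 1))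
        + (starRingEnd ℂ) (μv j * z j) • Phi (cf z) (s.image (fun x => x + Pi.single j 1))) := by
  classical
  have hz0 : ∀ j, z j ≠ 0 := fun j h => by simpa [h] using hz j
  have key1 : ∀ j, (μv j * z j) • Phi (cf z) (s.image (fun x => x - Pi.single j 1))
      = ∑ x ∈ s, (cf z x * μv j) • dK (x - Pi.single j 1) := by
    intro j
    rw [Phi, Finset.sum_image (fun a _ b _ h => sub_left_injective h), Finset.smul_sum]
    refine Finset.sum_congr rfl fun x _ => ?_
    rw [smul_smul, cf_sub hz]
    congr 1
    have hji := hz0 j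
    field_simp
  have key2 : ∀ j, (starRingEnd ℂ) (μv j * z j) • Phi (cf z) (s.image (fun x => x + Pi.single j 1))
      = ∑ x ∈ s, (cf z x * (starRingEnd ℂ) (μv j)) • dK (x + Pi.single j 1) := by
    intro j
    rw [Phi, Finset.sum_image (fun a _ b _ h => add_left_injective _ h), Finset.smul_sum]
    refine Finset.sum_congr rfl fun x _ => ?_
    rw [smul_smul, cf_add hz, map_mul]
    congr 1
    have h1 := conj_z_mul (hz j)
    linear_combination ((starRingEnd ℂ) (μv j) * cf z x) * h1
  have hV : ∑ x ∈ s, (cf z x * (V₀ : ℂ)) • dK x = (V₀ : ℂ) • Phi (cf z) s := by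
    rw [Phi, Finset.smul_sum]
    exact Finset.sum_congr rfl fun x _ => by rw [smul_smul, mul_comm]
  have hterm : ∀ x ∈ s, Tops μv V₀ L ι (cf z x • dK x)
      = (∑ j, ((cf z x * μv j) • dK (x - Pi.single j 1)
          + (cf z x * (starRingEnd ℂ) (μv j)) • dK (x + Pi.single j 1)))
        + (cf z x * (V₀ : ℂ)) • dK x := by
    intro x hx
    rw [_root_.map_smul, Tops_dK μv V₀ hL hι x (hs x hx), smul_add, Finset.smul_sum, smul_smul]
    congr 1
    refine Finset.sum_congr rfl fun j _ => ?_
    rw [smul_add, smul_smul, smul_smul]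
  rw [Phi, map_sum, Finset.sum_congr rfl hterm, Finset.sum_add_distrib, hV, Finset.sum_comm]
  rw [add_comm]
  congr 1
  refine Finset.sum_congr rfl fun j _ => ?_
  rw [Finset.sum_add_distrib, key1 j, key2 j]

end topsphi

section boxes
variable {n : ℕ}

lemma sub_slab (lo hi : Fin n → ℤ) (j : Fin n) (ε : ℤ) (hε : ε = 1 ∨ ε = -1) :
    ((Fintype.piFinset fun j' => Finset.Icc (lo j') (hi j')).image (fun y => y + Pi.single j ε))
      \ (Fintype.piFinset fun j' => Finset.Icc (lo j') (hi j'))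
    ⊆ Fintype.piFinset fun j' =>
        Finset.Icc (if j' = j then (if ε = 1 then hi j + 1 else lo j - 1) else lo j')
                   (if j' = j then (if ε = 1 then hi j + 1 else lo j - 1) else hi j') := by
  classical
  intro x hx
  rw [Finset.mem_sdiff, Finset.mem_image] at hx
  obtain ⟨⟨y, hy, rfl⟩, hnot⟩ := hx
  rw [Fintype.mem_piFinset] at hy
  have hadd : ∀ k, ((y + Pi.single j ε : Fin n → ℤ)) k = y k + (if k = j then ε else 0) := by
    intro k; rw [Pi.add_apply, Pi.single_apply]
  have hnot' : ∃ j'', ¬(lo j'' ≤ y j'' + (if j'' = j then ε else 0)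
      ∧ y j'' + (if j'' = j then ε else 0) ≤ hi j'') := by
    by_contra hc
    push_neg at hc
    refine hnot (Fintype.mem_piFinset.2 fun j'' => Finset.mem_Icc.2 ?_)
    rw [hadd]
    exact ⟨(hc j'').1, (hc j'').2⟩
  obtain ⟨j'', hj''⟩ := hnot'
  have hj''j : j'' = j := by
    by_contra hne
    rw [if_neg hne] at hj''
    have := Finset.mem_Icc.1 (hy j'')
    omega
  rw [hj''j, if_pos rfl] at hj''
  have hyj := Finset.mem_Icc.1 (hy j)
  rw [Fintype.mem_piFinset]
  intro j'
  rw [Finset.mem_Icc, hadd]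
  have h5 := Finset.mem_Icc.1 (hy j')
  by_cases hj : j' = j
  · simp only [if_pos hj]
    have h6 : y j' = y j := by rw [hj]
    split_ifs with h1 <;> omega
  · simp only [if_neg hj]
    omega

lemma sub_slab' (lo hi : Fin n → ℤ) (j : Fin n) (ε : ℤ) (hε : ε = 1 ∨ ε = -1) :
    (Fintype.piFinset fun j' => Finset.Icc (lo j') (hi j'))
      \ ((Fintype.piFinset fun j' => Finset.Icc (lo j') (hi j')).image (fun y => y + Pi.single j ε))
    ⊆ Fintype.piFinset fun j' =>
        Finset.Icc (if j' = j then (if ε = 1 then lo j else hi j) else lo j')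
                   (if j' = j then (if ε = 1 then lo j else hi j) else hi j') := by
  classical
  intro x hx
  rw [Finset.mem_sdiff] at hx
  obtain ⟨hxb, hnot⟩ := hx
  rw [Fintype.mem_piFinset] at hxb
  have hsub : ∀ k, ((x - Pi.single j ε : Fin n → ℤ)) k = x k - (if k = j then ε else 0) := by
    intro k; rw [Pi.sub_apply, Pi.single_apply]
  have himg : (x - Pi.single j ε) ∉ (Fintype.piFinset fun j' => Finset.Icc (lo j') (hi j')) := by
    intro hc
    exact hnot (Finset.mem_image.2 ⟨x - Pi.single j ε, hc, by rw [sub_add_cancel]⟩)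
  have hnot' : ∃ j'', ¬(lo j'' ≤ x j'' - (if j'' = j then ε else 0)
      ∧ x j'' - (if j'' = j then ε else 0) ≤ hi j'') := by
    by_contra hc
    push_neg at hc
    refine himg (Fintype.mem_piFinset.2 fun j'' => Finset.mem_Icc.2 ?_)
    rw [hsub]
    exact ⟨(hc j'').1, (hc j'').2⟩
  obtain ⟨j'', hj''⟩ := hnot'
  have hj''j : j'' = j := by
    by_contra hne
    rw [if_neg hne] at hj''
    have := Finset.mem_Icc.1 (hxb j'')
    omega
  rw [hj''j, if_pos rfl] at hj''
  have hyj := Finset.mem_Icc.1 (hxb j)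
  rw [Fintype.mem_piFinset]
  intro j'
  rw [Finset.mem_Icc]
  have h5 := Finset.mem_Icc.1 (hxb j')
  by_cases hj : j' = j
  · simp only [if_pos hj]
    have h6 : x j' = x j := by rw [hj]
    split_ifs with h1 <;> omega
  · simp only [if_neg hj]
    omega

lemma slab_card_le (lo hi : Fin n → ℤ) (j : Fin n) (A : ℤ) (N : ℕ)
    (h : ∀ j', (hi j' + 1 - lo j').toNat ≤ N) :
    (Fintype.piFinset fun j' => Finset.Icc (if j' = j then A else lo j')
      (if j' = j then A else hi j')).card ≤ N ^ (n - 1) := by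
  classical
  rw [Fintype.card_piFinset]
  have hcard : ∀ j', (Finset.Icc (if j' = j then A else lo j')
      (if j' = j then A else hi j')).card = if j' = j then 1 else (hi j' + 1 - lo j').toNat := by
    intro j'
    split_ifs with hj <;> rw [Int.card_Icc] <;> omega
  rw [Finset.prod_congr rfl fun j' _ => hcard j']
  rw [← Finset.mul_prod_erase Finset.univ _ (Finset.mem_univ j), if_pos rfl, one_mul]
  calc ∏ j' ∈ Finset.univ.erase j, (if j' = j then 1 else (hi j' + 1 - lo j').toNat)
      ≤ ∏ _j' ∈ Finset.univ.erase j, N := by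
        refine Finset.prod_le_prod' fun j' hj' => ?_
        rw [if_neg (Finset.mem_erase.1 hj').1]
        exact h j'
    _ = N ^ (n - 1) := by
        rw [Finset.prod_const, Finset.card_erase_of_mem (Finset.mem_univ j), Finset.card_univ,
          Fintype.card_fin]

end boxes


set_option maxHeartbeats 1600000 in
/-- if `μ ≠ 0` and `λ ∈ [V₀ - 2μ, V₀ + 2μ]`, there is a normalized
sequence in `𝒦` converging weakly to `0` with `‖(T - λ)φ_m‖ → 0`. -/
theorem stmt_5 (n : ℕ) (hn : 1 ≤ n) (μv : Fin n → ℂ) (V₀ : ℝ)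
    (hμ : (∑ j, ‖μv j‖) ≠ 0)
    (L : Fin n → (Kt n →L[ℂ] Kt n)) (hL : IsShift L)
    (ι : Ks n →L[ℂ] Kt n) (hι : IsIota ι)
    (lam : ℝ)
    (hlam : lam ∈ Set.Icc (V₀ - 2 * ∑ j, ‖μv j‖)
                          (V₀ + 2 * ∑ j, ‖μv j‖)) :
    ∃ φseq : ℕ → Ks n,
      (∀ m, ‖φseq m‖ = 1) ∧
      (∀ φ : Ks n, Tendsto (fun m => (inner ℂ φ (φseq m) : ℂ)) atTop (𝓝 0)) ∧
      Tendsto (fun m => ‖Tops μv V₀ L ι (φseq m) - (lam : ℂ) • φseq m‖) atTop (𝓝 0) := by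
  classical
  -- the real number μ
  have hμnonneg : (0:ℝ) ≤ ∑ j, ‖μv j‖ :=
    Finset.sum_nonneg fun j _ => norm_nonneg _
  set μR : ℝ := ∑ j, ‖μv j‖ with hμR
  have hμpos : 0 < μR := hμnonneg.lt_of_ne (Ne.symm hμ)
  obtain ⟨hlam1, hlam2⟩ := hlam
  have harg1 : -1 ≤ (lam - V₀) / (2 * μR) := by
    rw [le_div_iff₀ (by positivity)]
    nlinarith
  have harg2 : (lam - V₀) / (2 * μR) ≤ 1 := by
    rw [div_le_one (by positivity)]
    linarith
  set t : ℝ := Real.arccos ((lam - V₀) / (2 * μR)) with ht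
  have hcos : Real.cos t = (lam - V₀) / (2 * μR) := Real.cos_arccos harg1 harg2
  have h2μcos : 2 * μR * Real.cos t = lam - V₀ := by
    rw [hcos]; field_simp
  set w : ℂ := Complex.exp (t * Complex.I) with hw
  have hwnorm : ‖w‖ = 1 := by rw [hw, Complex.norm_exp_ofReal_mul_I]
  have hwconj : w + (starRingEnd ℂ) w = ((2 * Real.cos t : ℝ) : ℂ) := by
    rw [hw, Complex.add_conj, Complex.exp_ofReal_mul_I_re]
  set z : Fin n → ℂ := fun j => if μv j = 0 then w else ((‖μv j‖ : ℂ) / μv j) * w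
    with hzdef
  have hz : ∀ j, ‖z j‖ = 1 := by
    intro j
    by_cases h : μv j = 0
    · simp only [hzdef, if_pos h]; exact hwnorm
    · simp only [hzdef, if_neg h]
      rw [norm_mul, hwnorm, mul_one, norm_div, Complex.norm_real, Real.norm_eq_abs,
        abs_of_nonneg (norm_nonneg _),
        div_self (norm_ne_zero_iff.mpr h)]
  have hmuz : ∀ j, μv j * z j = ((‖μv j‖ : ℝ) : ℂ) * w := by
    intro j
    by_cases h : μv j = 0
    · simp [hzdef, h]
    · simp only [hzdef, if_neg h]
      field_simp
  have key : (V₀ : ℂ) + ∑ j, (μv j * z j + (starRingEnd ℂ) (μv j * z j)) = (lam : ℂ) := by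
    have hterm : ∀ j, μv j * z j + (starRingEnd ℂ) (μv j * z j)
        = ((‖μv j‖ : ℝ) : ℂ) * (w + (starRingEnd ℂ) w) := by
      intro j
      rw [hmuz j, map_mul, Complex.conj_ofReal]
      ring
    rw [Finset.sum_congr rfl fun j _ => hterm j, ← Finset.sum_mul, hwconj]
    have hsum : (∑ j, ((‖μv j‖ : ℝ) : ℂ)) = ((μR : ℝ) : ℂ) := by
      rw [hμR]; push_cast; ring
    rw [hsum, ← Complex.ofReal_mul]
    have hr : μR * (2 * Real.cos t) = lam - V₀ := by linarith [h2μcos]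
    rw [hr]
    push_cast
    ring
  -- boxes
  set j0 : Fin n := ⟨0, hn⟩ with hj0
  set b : ℕ → ℤ := fun m => 2 + ∑ k ∈ Finset.range m, ((k : ℤ) + 1) with hbdef
  have hb2 : ∀ m, 2 ≤ b m := by
    intro m
    have h0 : (0:ℤ) ≤ ∑ k ∈ Finset.range m, ((k : ℤ) + 1) :=
      Finset.sum_nonneg fun k _ => by positivity
    simp only [hbdef]; omega
  have hbsucc : ∀ m, b (m + 1) = b m + (m + 1) := by
    intro m; simp only [hbdef, Finset.sum_range_succ]; push_cast; ring
  have hbgap : ∀ m m', m < m' → b m + m < b m' := by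
    intro m m' h
    induction m' with
    | zero => omega
    | succ k ih =>
      rcases Nat.lt_succ_iff_lt_or_eq.1 h with h' | h'
      · have := ih h'
        rw [hbsucc k]; push_cast; omega
      · subst h'; rw [hbsucc m]; push_cast; omega
  set cc : ℕ → Fin n → ℤ := fun m j => if j = j0 then b m else 0 with hccdef
  set S : ℕ → Finset (Fin n → ℤ) :=
    fun m => Fintype.piFinset (fun j => Finset.Icc (cc m j) (cc m j + m)) with hSdef
  have hmemS : ∀ m x, x ∈ S m ↔ ∀ j, cc m j ≤ x j ∧ x j ≤ cc m j + m := by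
    intro m x
    simp only [hSdef, Fintype.mem_piFinset, Finset.mem_Icc]
  have hSj0 : ∀ m x, x ∈ S m → b m ≤ x j0 ∧ x j0 ≤ b m + m := by
    intro m x hx
    have h := (hmemS m x).1 hx j0
    simp only [hccdef, if_pos rfl] at h
    exact h
  have hSne : ∀ m, ∀ x ∈ S m, x ≠ 0 := by
    intro m x hx h0
    have h1 := (hSj0 m x hx).1
    have h2 := hb2 m
    rw [h0, Pi.zero_apply] at h1
    omega
  have hcardS : ∀ m, (S m).card = (m + 1) ^ n := by
    intro m
    simp only [hSdef]
    rw [Fintype.card_piFinset]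
    have h1 : ∀ j, (Finset.Icc (cc m j) (cc m j + (m:ℤ))).card = m + 1 := by
      intro j; rw [Int.card_Icc]; omega
    rw [Finset.prod_congr rfl fun j _ => h1 j, Finset.prod_const, Finset.card_univ,
      Fintype.card_fin]
  have himg_ne : ∀ m (j : Fin n) (ε : ℤ), ε = 1 ∨ ε = -1 →
      ∀ x ∈ (S m).image (fun y => y + Pi.single j ε), x ≠ 0 := by
    intro m j ε hε x hx h0
    obtain ⟨y, hy, rfl⟩ := Finset.mem_image.1 hx
    have h2 := (hSj0 m y hy).1
    have h2' := hb2 m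
    have h4 := congrFun h0 j0
    rw [Pi.add_apply, Pi.single_apply, Pi.zero_apply] at h4
    split_ifs at h4 <;> omega
  -- the sequence
  set c : (Fin n → ℤ) → ℂ := cf z with hcdef
  set φu : ℕ → Ks n := fun m => Phi c (S m) with hφu
  set r : ℕ → ℝ := fun m => Real.sqrt (((m + 1) ^ n : ℕ) : ℝ) with hrdef
  have hrpos : ∀ m, 0 < r m := by
    intro m
    apply Real.sqrt_pos.2
    positivity
  have hnormu : ∀ m, ‖φu m‖ = r m := by
    intro m
    simp only [hφu, hrdef]
    rw [norm_Phi_eq c (S m) (hSne m) (fun x _ => cf_norm hz x), hcardS m]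
  set φseq : ℕ → Ks n := fun m => (((r m : ℝ) : ℂ))⁻¹ • φu m with hφseq
  have hnorm1 : ∀ m, ‖φseq m‖ = 1 := by
    intro m
    simp only [hφseq]
    rw [norm_smul, norm_inv, Complex.norm_real, Real.norm_eq_abs, abs_of_pos (hrpos m),
      hnormu m]
    field_simp [(hrpos m).ne']
  refine ⟨φseq, hnorm1, ?_, ?_⟩
  · -- weak convergence to 0
    intro φ
    set aφ : (Fin n → ℤ) → ℂ := fun x => if h : x = 0 then 0 else φ ⟨x, h⟩ with haφ
    have hsq : Summable (fun v : {x : Fin n → ℤ // x ≠ 0} => ‖φ v‖ ^ 2) := by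
      have h1 := (lp.memℓp φ).summable (p := 2) (by norm_num)
      have h2 : (fun v : {x : Fin n → ℤ // x ≠ 0} => ‖φ v‖ ^ (2 : ℝ≥0∞).toReal)
          = fun v => ‖φ v‖ ^ 2 := by
        funext v
        rw [ENNReal.toReal_ofNat, ← Real.rpow_natCast (‖φ v‖) 2]
        norm_num
      rwa [h2] at h1
    have hext : Summable (fun x : Fin n → ℤ => ‖aφ x‖ ^ 2) := by
      have hvalinj : Function.Injective
          (Subtype.val : {x : Fin n → ℤ // x ≠ 0} → (Fin n → ℤ)) := Subtype.val_injective
      refine (hvalinj.summable_iff ?_).1 ?_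
      · intro x hx
        have hx0 : x = 0 := by
          by_contra hne
          exact hx ⟨⟨x, hne⟩, rfl⟩
        simp [haφ, hx0]
      · have h3 : ((fun x => ‖aφ x‖ ^ 2) ∘ (Subtype.val : {x : Fin n → ℤ // x ≠ 0} → _))
            = fun v => ‖φ v‖ ^ 2 := by
          funext v
          simp only [Function.comp_apply, haφ, dif_neg v.2]
        rw [h3]
        exact hsq
    have hdisj : ∀ m1 m2, m1 ≠ m2 → Disjoint (S m1) (S m2) := by
      intro m1 m2 hne
      rw [Finset.disjoint_left]
      intro x h1 h2
      have a1 := hSj0 m1 x h1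
      have a2 := hSj0 m2 x h2
      rcases Nat.lt_or_ge m1 m2 with h | h
      · have := hbgap m1 m2 h; omega
      · have hlt : m2 < m1 := by omega
        have := hbgap m2 m1 hlt; omega
    have hsum_le : ∀ M, ∑ m ∈ Finset.range M, (∑ x ∈ S m, ‖aφ x‖ ^ 2)
        ≤ ∑' x : Fin n → ℤ, ‖aφ x‖ ^ 2 := by
      intro M
      rw [← Finset.sum_biUnion (fun m1 _ m2 _ hne => hdisj m1 m2 hne)]
      exact Summable.sum_le_tsum _ (fun x _ => by positivity) hext
    have hgsum : Summable (fun m => ∑ x ∈ S m, ‖aφ x‖ ^ 2) :=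
      summable_of_sum_range_le (fun m => Finset.sum_nonneg fun x _ => by positivity) hsum_le
    have hg0 : Tendsto (fun m => ∑ x ∈ S m, ‖aφ x‖ ^ 2) atTop (𝓝 0) :=
      hgsum.tendsto_atTop_zero
    have hbound : ∀ m, ‖(inner ℂ φ (φseq m) : ℂ)‖ ≤ Real.sqrt (∑ x ∈ S m, ‖aφ x‖ ^ 2) := by
      intro m
      have hinner_eq : (inner ℂ φ (φu m) : ℂ) = inner ℂ (Phi aφ (S m)) (φu m) := by
        simp only [hφu]
        rw [inner_left_Phi φ c (S m), inner_Phi_Phi aφ c (S m) (hSne m)]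
        exact Finset.sum_congr rfl fun x _ => mul_comm _ _
      have hψnorm : ‖Phi aφ (S m)‖ = Real.sqrt (∑ x ∈ S m, ‖aφ x‖ ^ 2) := by
        rw [← Real.sqrt_sq (norm_nonneg (Phi aφ (S m))), norm_Phi_sq aφ (S m) (hSne m)]
      calc ‖(inner ℂ φ (φseq m) : ℂ)‖
          = (r m)⁻¹ * ‖(inner ℂ φ (φu m) : ℂ)‖ := by
            simp only [hφseq]
            rw [inner_smul_right, norm_mul, norm_inv, Complex.norm_real, Real.norm_eq_abs,
              abs_of_pos (hrpos m)]
        _ = (r m)⁻¹ * ‖(inner ℂ (Phi aφ (S m)) (φu m) : ℂ)‖ := by rw [hinner_eq]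
        _ ≤ (r m)⁻¹ * (‖Phi aφ (S m)‖ * ‖φu m‖) := by
            exact mul_le_mul_of_nonneg_left (norm_inner_le_norm _ _)
              (inv_nonneg.2 (hrpos m).le)
        _ = ‖Phi aφ (S m)‖ := by
            rw [hnormu m, mul_comm (‖Phi aφ (S m)‖) (r m), ← mul_assoc,
              inv_mul_cancel₀ (hrpos m).ne', one_mul]
        _ ≤ Real.sqrt (∑ x ∈ S m, ‖aφ x‖ ^ 2) := le_of_eq hψnorm
    have hsqrt0 : Tendsto (fun m => Real.sqrt (∑ x ∈ S m, ‖aφ x‖ ^ 2)) atTop (𝓝 0) := by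
      have h := (Real.continuous_sqrt.tendsto 0).comp hg0
      simpa [Function.comp_def, Real.sqrt_zero] using h
    exact squeeze_zero_norm hbound hsqrt0
  · -- the error goes to zero
    have herr : ∀ m, ‖Tops μv V₀ L ι (φseq m) - (lam : ℂ) • φseq m‖
        ≤ (r m)⁻¹ * (4 * μR * Real.sqrt (((m + 1) ^ (n - 1) : ℕ) : ℝ)) := by
      intro m
      set N1 : ℕ := (m + 1) ^ (n - 1) with hN1
      -- bounds for shifted boxes
      have hdiff : ∀ (j : Fin n) (ε : ℤ), ε = 1 ∨ ε = -1 →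
          ‖Phi c ((S m).image (fun y => y + Pi.single j ε)) - φu m‖
            ≤ 2 * Real.sqrt (N1 : ℝ) := by
        intro j ε hε
        simp only [hφu]
        rw [Phi_diff]
        refine le_trans (norm_sub_le _ _) ?_
        have hcard_le : ∀ A : ℤ,
            (Fintype.piFinset fun j' => Finset.Icc (if j' = j then A else cc m j')
              (if j' = j then A else cc m j' + m)).card ≤ N1 := by
          intro A
          refine slab_card_le (cc m) (fun j' => cc m j' + m) j A (m + 1) (fun j' => ?_)
          show ((cc m j' + (m:ℤ)) + 1 - cc m j').toNat ≤ m + 1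
          omega
        have h1 : ‖Phi c ((S m).image (fun y => y + Pi.single j ε) \ S m)‖
            ≤ Real.sqrt (N1 : ℝ) := by
          apply norm_Phi_le
          · intro x hx
            exact himg_ne m j ε hε x (Finset.mem_sdiff.1 hx).1
          · intro x _; exact cf_norm hz x
          · refine le_trans (Finset.card_le_card
              (by simp only [hSdef]
                  exact sub_slab (cc m) (fun j' => cc m j' + m) j ε hε)) (hcard_le _)
        have h2 : ‖Phi c (S m \ (S m).image (fun y => y + Pi.single j ε))‖
            ≤ Real.sqrt (N1 : ℝ) := by
          apply norm_Phi_le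
          · intro x hx
            exact hSne m x (Finset.mem_sdiff.1 hx).1
          · intro x _; exact cf_norm hz x
          · refine le_trans (Finset.card_le_card
              (by simp only [hSdef]
                  exact sub_slab' (cc m) (fun j' => cc m j' + m) j ε hε)) (hcard_le _)
        linarith
      have hfun : ∀ j : Fin n, (fun x : Fin n → ℤ => x - Pi.single j 1)
          = (fun y => y + Pi.single j (-1)) := by
        intro j; funext y; funext j'
        rw [Pi.sub_apply, Pi.add_apply, Pi.single_apply, Pi.single_apply]
        split_ifs <;> ring
      have hTid : Tops μv V₀ L ι (φu m) - (lam : ℂ) • φu m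
          = ∑ j, ((μv j * z j) • (Phi c ((S m).image (fun y => y + Pi.single j (-1))) - φu m)
            + (starRingEnd ℂ) (μv j * z j)
              • (Phi c ((S m).image (fun y => y + Pi.single j 1)) - φu m)) := by
        have hTP := Tops_Phi μv V₀ hL hι z hz (S m) (hSne m)
        simp only [hφu, hcdef]
        rw [hTP]
        have e1 : ∀ j : Fin n,
            (μv j * z j) • (Phi (cf z) ((S m).image (fun y => y + Pi.single j (-1)))
              - Phi (cf z) (S m))
            + (starRingEnd ℂ) (μv j * z j)
              • (Phi (cf z) ((S m).image (fun y => y + Pi.single j 1)) - Phi (cf z) (S m))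
            = ((μv j * z j) • Phi (cf z) ((S m).image (fun y => y + Pi.single j (-1)))
              + (starRingEnd ℂ) (μv j * z j)
                • Phi (cf z) ((S m).image (fun y => y + Pi.single j 1)))
              - (μv j * z j + (starRingEnd ℂ) (μv j * z j)) • Phi (cf z) (S m) := by
          intro j
          rw [smul_sub, smul_sub, add_smul]
          abel
        rw [Finset.sum_congr rfl fun j _ => e1 j, Finset.sum_sub_distrib, ← Finset.sum_smul]
        have e2 : (∑ j, (μv j * z j + (starRingEnd ℂ) (μv j * z j))) = (lam : ℂ) - (V₀ : ℂ) := by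
          linear_combination key
        rw [e2, sub_smul]
        have e3 : ∀ j : Fin n, (S m).image (fun x => x - Pi.single j 1)
            = (S m).image (fun y => y + Pi.single j (-1)) := by
          intro j; rw [hfun j]
        rw [Finset.sum_congr rfl fun j _ => by rw [e3 j]]
        abel
      have hsplit : Tops μv V₀ L ι (φseq m) - (lam : ℂ) • φseq m
          = (((r m : ℝ) : ℂ))⁻¹ • (Tops μv V₀ L ι (φu m) - (lam : ℂ) • φu m) := by
        simp only [hφseq]
        rw [_root_.map_smul, smul_sub, smul_comm ((lam : ℂ)) _ (φu m)]
      rw [hsplit, norm_smul, hTid]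
      have hnum : ‖(((r m : ℝ) : ℂ))⁻¹‖ = (r m)⁻¹ := by
        rw [norm_inv, Complex.norm_real, Real.norm_eq_abs, abs_of_pos (hrpos m)]
      rw [hnum]
      refine mul_le_mul_of_nonneg_left ?_ (inv_nonneg.2 (hrpos m).le)
      refine le_trans (norm_sum_le _ _) ?_
      have hterm_le : ∀ j : Fin n,
          ‖(μv j * z j) • (Phi c ((S m).image (fun y => y + Pi.single j (-1))) - φu m)
            + (starRingEnd ℂ) (μv j * z j)
              • (Phi c ((S m).image (fun y => y + Pi.single j 1)) - φu m)‖
          ≤ ‖μv j‖ * (4 * Real.sqrt (N1 : ℝ)) := by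
        intro j
        have hA : ‖μv j * z j‖ = ‖μv j‖ := by
          rw [norm_mul, hz j, mul_one]
        have hAc : ‖(starRingEnd ℂ) (μv j * z j)‖ = ‖μv j‖ := by
          rw [RCLike.norm_conj, hA]
        refine le_trans (norm_add_le _ _) ?_
        rw [norm_smul, norm_smul, hA, hAc]
        have b1 := hdiff j (-1) (Or.inr rfl)
        have b2 := hdiff j 1 (Or.inl rfl)
        have habs := norm_nonneg (μv j)
        nlinarith [Real.sqrt_nonneg (N1 : ℝ)]
      refine le_trans (Finset.sum_le_sum fun j _ => hterm_le j) ?_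
      rw [← Finset.sum_mul, hμR]
      ring_nf
      nlinarith [Real.sqrt_nonneg (N1 : ℝ), hμnonneg]
    -- the bound tends to zero
    have hBval : ∀ m, (r m)⁻¹ * (4 * μR * Real.sqrt (((m + 1) ^ (n - 1) : ℕ) : ℝ))
        = 4 * μR * Real.sqrt (1 / (m + 1 : ℝ)) := by
      intro m
      have hm1 : (0:ℝ) < (m + 1 : ℝ) := by positivity
      have hc1 : (((m + 1) ^ (n - 1) : ℕ) : ℝ) = ((m + 1 : ℝ)) ^ (n - 1) := by push_cast; ring
      have hc2 : (((m + 1) ^ n : ℕ) : ℝ) = ((m + 1 : ℝ)) ^ n := by push_cast; ring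
      have hpow : ((m + 1 : ℝ)) ^ n = ((m + 1 : ℝ)) ^ (n - 1) * (m + 1 : ℝ) := by
        rw [← pow_succ]
        congr 1
        omega
      have hsq : Real.sqrt (1 / (m + 1 : ℝ))
          = Real.sqrt (((m + 1) ^ (n - 1) : ℕ) : ℝ) / r m := by
        rw [hrdef]
        rw [← Real.sqrt_div (by positivity) _]
        congr 1
        rw [hc1, hc2, hpow]
        field_simp
      rw [hsq]
      field_simp
    have hB0 : Tendsto (fun m : ℕ => (r m)⁻¹
        * (4 * μR * Real.sqrt (((m + 1) ^ (n - 1) : ℕ) : ℝ))) atTop (𝓝 0) := by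
      have h1 : Tendsto (fun m : ℕ => 1 / (m + 1 : ℝ)) atTop (𝓝 0) :=
        tendsto_one_div_add_atTop_nhds_zero_nat
      have h2 : Tendsto (fun m : ℕ => Real.sqrt (1 / (m + 1 : ℝ))) atTop (𝓝 0) := by
        have h := (Real.continuous_sqrt.tendsto 0).comp h1
        simpa [Function.comp_def, Real.sqrt_zero] using h
      have h3 : Tendsto (fun m : ℕ => 4 * μR * Real.sqrt (1 / (m + 1 : ℝ))) atTop (𝓝 0) := by
        simpa using h2.const_mul (4 * μR)
      refine h3.congr ?_
      intro m
      rw [hBval m]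
    exact squeeze_zero (fun m => norm_nonneg _) herr hB0
end cf
end
end

section
/- Let λ ∈ ℝ and suppose (ψ_m) is a sequence in 𝒦̃ with ‖ψ_m‖ = 1 for all m, ⟨ψ, ψ_m⟩ → 0 for every ψ ∈ 𝒦̃, and ‖(T̃₀ − λ)ψ_m‖ → 0. Then there exists a sequence (φ_m) in 𝒦 with ‖φ_m‖ = 1 for all m, ⟨φ, φ_m⟩ → 0 for every φ ∈ 𝒦, and ‖(T − λ)φ_m‖ → 0. (One may take, for all large m, φ_m = ι*ψ_m / √(1 − |ψ_m(0)|²).) -/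
open MeasureTheory Filter Topology ComplexConjugate ContinuousLinearMap
open scoped ENNReal Real

noncomputable section

set_option maxHeartbeats 1000000 in
/-- a normalized weak-null Weyl sequence for `T̃₀` at `λ` yields a
normalized weak-null Weyl sequence for `T` at `λ`. -/
theorem stmt_6 (n : ℕ) (hn : 1 ≤ n) (μv : Fin n → ℂ) (V₀ : ℝ)
    (L : Fin n → (Kt n →L[ℂ] Kt n)) (hL : IsShift L)
    (ι : Ks n →L[ℂ] Kt n) (hι : IsIota ι)
    (lam : ℝ) (ψseq : ℕ → Kt n)
    (hnorm : ∀ m, ‖ψseq m‖ = 1)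
    (hweak : ∀ ψ : Kt n, Tendsto (fun m => (inner ℂ ψ (ψseq m) : ℂ)) atTop (𝓝 0))
    (hWeyl : Tendsto (fun m => ‖T0op μv V₀ L (ψseq m) - (lam : ℂ) • ψseq m‖)
      atTop (𝓝 0)) :
    ∃ φseq : ℕ → Ks n,
      (∀ m, ‖φseq m‖ = 1) ∧
      (∀ φ : Ks n, Tendsto (fun m => (inner ℂ φ (φseq m) : ℂ)) atTop (𝓝 0)) ∧
      Tendsto (fun m => ‖Tops μv V₀ L ι (φseq m) - (lam : ℂ) • φseq m‖) atTop (𝓝 0) := by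
  classical
  set P := ContinuousLinearMap.adjoint ι with hP
  set δ : Kt n := lp.single 2 (0 : Fin n → ℤ) (1 : ℂ) with hδdef
  -- pointwise formula for the adjoint
  have hsingle : ∀ (y : {x : Fin n → ℤ // x ≠ 0}),
      ι (lp.single 2 y (1 : ℂ)) = lp.single 2 (↑y : Fin n → ℤ) (1 : ℂ) := by
    intro y
    apply lp.ext; funext x
    rw [hι]
    by_cases hx : x = (↑y : Fin n → ℤ)
    · subst hx
      rw [dif_neg y.2]
      have hyy : (⟨(↑y : Fin n → ℤ), y.2⟩ : {x : Fin n → ℤ // x ≠ 0}) = y := Subtype.ext rfl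
      rw [hyy, lp.single_apply_self, lp.single_apply_self]
    · by_cases hx0 : x = 0
      · rw [dif_pos hx0, lp.single_apply_ne _ _ _ hx]
      · rw [dif_neg hx0, lp.single_apply_ne _ _ _ hx,
          lp.single_apply_ne _ _ _ (fun h => hx (congrArg Subtype.val h))]
  have hPapp : ∀ (ψ : Kt n) (y : {x : Fin n → ℤ // x ≠ 0}), (P ψ) y = ψ ↑y := by
    intro ψ y
    have h1 : (inner ℂ (lp.single 2 y (1 : ℂ)) (P ψ) : ℂ) = (P ψ) y := by
      rw [lp.inner_single_left]; simp
    have h2 : (inner ℂ (lp.single 2 y (1 : ℂ)) (P ψ) : ℂ)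
        = inner ℂ (ι (lp.single 2 y (1 : ℂ))) ψ := by
      rw [hP, ContinuousLinearMap.adjoint_inner_right]
    rw [← h1, h2, hsingle, lp.inner_single_left]; simp
  have hiP : ∀ ψ : Kt n, ι (P ψ) = ψ - ψ 0 • δ := by
    intro ψ
    apply lp.ext; funext x
    have hc : (ψ - ψ 0 • δ) x = ψ x - ψ 0 * δ x := by
      rw [lp.coeFn_sub]; simp [lp.coeFn_smul]
    rw [hι, hc]
    by_cases hx0 : x = 0
    · subst hx0
      rw [dif_pos rfl, hδdef, lp.single_apply_self]
      ring
    · rw [dif_neg hx0, hPapp, hδdef, lp.single_apply_ne _ _ _ hx0]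
      ring
  have hδ0 : ∀ ψ : Kt n, (inner ℂ δ ψ : ℂ) = ψ 0 := by
    intro ψ; rw [hδdef, lp.inner_single_left]; simp
  have hz : Tendsto (fun m => ψseq m 0) atTop (𝓝 0) := by
    have := hweak δ
    simpa only [hδ0] using this
  have hzn : Tendsto (fun m => ‖ψseq m 0‖) atTop (𝓝 0) := by
    simpa using hz.norm
  -- norm identity
  have hnormP : ∀ m, ‖P (ψseq m)‖ ^ 2 = 1 - ‖ψseq m 0‖ ^ 2 := by
    intro m
    have h1 : (inner ℂ (P (ψseq m)) (P (ψseq m)) : ℂ)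
        = inner ℂ (ψseq m) (ι (P (ψseq m))) := by
      rw [hP, ContinuousLinearMap.adjoint_inner_left]
    rw [hiP] at h1
    rw [inner_sub_right, inner_smul_right] at h1
    have h2 : (inner ℂ (ψseq m) δ : ℂ) = (starRingEnd ℂ) (ψseq m 0) := by
      rw [← inner_conj_symm, hδ0]
    rw [h2] at h1
    have h3 : (inner ℂ (P (ψseq m)) (P (ψseq m)) : ℂ) = (‖P (ψseq m)‖ : ℂ) ^ 2 :=
      inner_self_eq_norm_sq_to_K _
    have h4 : (inner ℂ (ψseq m) (ψseq m) : ℂ) = (‖ψseq m‖ : ℂ) ^ 2 :=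
      inner_self_eq_norm_sq_to_K _
    have h5 : ψseq m 0 * (starRingEnd ℂ) (ψseq m 0) = (‖ψseq m 0‖ : ℂ) ^ 2 :=
      RCLike.mul_conj _
    rw [h3, h4, h5, hnorm m] at h1
    have h6 : ((‖P (ψseq m)‖ ^ 2 : ℝ) : ℂ) = ((1 - ‖ψseq m 0‖ ^ 2 : ℝ) : ℂ) := by
      push_cast
      push_cast at h1
      linear_combination h1
    exact_mod_cast h6
  set a : ℕ → ℝ := fun m => ‖P (ψseq m)‖ with ha_def
  have ha : Tendsto a atTop (𝓝 1) := by
    have h1 : Tendsto (fun m => 1 - ‖ψseq m 0‖ ^ 2) atTop (𝓝 1) := by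
      have : Tendsto (fun m => ‖ψseq m 0‖ ^ 2) atTop (𝓝 0) := by
        simpa using hzn.pow 2
      simpa using (tendsto_const_nhds (x := (1 : ℝ))).sub this
    have h2 : Tendsto (fun m => Real.sqrt (1 - ‖ψseq m 0‖ ^ 2)) atTop (𝓝 1) := by
      have := (Real.continuous_sqrt.tendsto 1).comp h1
      simpa [Function.comp_def] using this
    refine h2.congr fun m => ?_
    rw [← hnormP m, Real.sqrt_sq (norm_nonneg _)]
  have haev : ∀ᶠ m in atTop, P (ψseq m) ≠ 0 := by
    filter_upwards [ha.eventually_ne one_ne_zero] with m hm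
    intro h
    exact hm (by simp only [ha_def, h, norm_zero])
  -- the candidate sequence
  set φone : Ks n := lp.single 2 (eV (⟨0, hn⟩ : Fin n)) (1 : ℂ) with hφone
  set φseq : ℕ → Ks n := fun m =>
    if h : P (ψseq m) = 0 then φone
    else ((‖P (ψseq m)‖ : ℂ))⁻¹ • P (ψseq m) with hφseq
  have hφev : ∀ᶠ m in atTop, φseq m = ((a m : ℂ))⁻¹ • P (ψseq m) := by
    filter_upwards [haev] with m hm
    rw [hφseq]; simp only [dif_neg hm, ha_def]
  have hcinv : Tendsto (fun m => ((a m : ℂ))⁻¹) atTop (𝓝 1) := by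
    have h1 : Tendsto (fun m => ((a m : ℂ))) atTop (𝓝 1) := by
      have := (Complex.continuous_ofReal.tendsto 1).comp ha
      simpa [Function.comp_def] using this
    simpa using h1.inv₀ one_ne_zero
  refine ⟨φseq, ?_, ?_, ?_⟩
  · intro m
    simp only [hφseq]
    by_cases h : P (ψseq m) = 0
    · rw [dif_pos h, hφone]
      exact (lp.norm_single (E := fun _ : {x : Fin n → ℤ // x ≠ 0} => ℂ) (p := 2) (by norm_num)
        (eV (⟨0, hn⟩ : Fin n)) (1 : ℂ)).trans (by simp)
    · rw [dif_neg h]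
      exact norm_smul_inv_norm h
  · intro φ
    have h1 : Tendsto (fun m => (inner ℂ (ι φ) (ψseq m) : ℂ)) atTop (𝓝 0) := hweak (ι φ)
    have h2 : Tendsto (fun m => ((a m : ℂ))⁻¹ * (inner ℂ (ι φ) (ψseq m) : ℂ)) atTop (𝓝 0) := by
      simpa using hcinv.mul h1
    refine (Tendsto.congr' ?_ h2)
    filter_upwards [hφev] with m hm
    rw [hm, inner_smul_right, hP, ContinuousLinearMap.adjoint_inner_right]
  · -- Weyl property
    have key : ∀ m, Tops μv V₀ L ι (P (ψseq m)) - (lam : ℂ) • P (ψseq m)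
        = P (T0op μv V₀ L (ψseq m) - (lam : ℂ) • ψseq m) - (ψseq m 0) • P (T0op μv V₀ L δ) := by
      intro m
      rw [Tops]
      simp only [ContinuousLinearMap.comp_apply]
      rw [show ι (P (ψseq m)) = ψseq m - ψseq m 0 • δ from hiP _]
      simp only [map_sub, _root_.map_smul, ← hP]
      module
    have hbd : Tendsto (fun m => ‖Tops μv V₀ L ι (P (ψseq m)) - (lam : ℂ) • P (ψseq m)‖)
        atTop (𝓝 0) := by
      have hb : Tendsto (fun m => ‖P‖ * ‖T0op μv V₀ L (ψseq m) - (lam : ℂ) • ψseq m‖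
          + ‖ψseq m 0‖ * ‖P (T0op μv V₀ L δ)‖) atTop (𝓝 0) := by
        have h1 := hWeyl.const_mul ‖P‖
        have h2 := hzn.mul_const ‖P (T0op μv V₀ L δ)‖
        simpa using h1.add h2
      refine squeeze_zero (fun m => norm_nonneg _) (fun m => ?_) hb
      rw [key m]
      refine (norm_sub_le _ _).trans ?_
      gcongr
      · exact P.le_opNorm _
      · rw [norm_smul]
    have h3 : Tendsto (fun m => ‖((a m : ℂ))⁻¹‖ *
        ‖Tops μv V₀ L ι (P (ψseq m)) - (lam : ℂ) • P (ψseq m)‖) atTop (𝓝 0) := by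
      simpa using hcinv.norm.mul hbd
    refine Tendsto.congr' ?_ h3
    filter_upwards [hφev] with m hm
    rw [hm, _root_.map_smul, smul_comm ((lam : ℂ)) (((a m : ℝ) : ℂ))⁻¹ (P (ψseq m)),
      ← smul_sub, norm_smul]
end
end

section
/- Let ν ∈ ℝ and suppose (φ_m) is a sequence in 𝒦 with ‖φ_m‖ = 1 for all m, ⟨φ, φ_m⟩ → 0 for every φ ∈ 𝒦, and ‖(T − ν)φ_m‖ → 0. Then the sequence ψ_m = ιφ_m in 𝒦̃ satisfies ‖ψ_m‖ = 1 for all m, ⟨ψ, ψ_m⟩ → 0 for every ψ ∈ 𝒦̃, and ‖(T̃₀ − ν)ψ_m‖ → 0. -/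
open MeasureTheory Filter Topology ComplexConjugate ContinuousLinearMap
open scoped ENNReal Real

noncomputable section

lemma eval_eq_inner {ι : Type*} [DecidableEq ι] (f : lp (fun _ : ι => ℂ) 2) (x : ι) :
    f x = inner (𝕜 := ℂ) (lp.single 2 x (1:ℂ)) f := by
  rw [lp.inner_single_left]
  simp [RCLike.inner_apply]

lemma iota_single {n : ℕ} (ι : Ks n →L[ℂ] Kt n) (hι : IsIota ι)
    (y : {x : Fin n → ℤ // x ≠ 0}) :
    ι (lp.single 2 y (1:ℂ)) = lp.single 2 y.1 (1:ℂ) := by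
  apply lp.ext; funext x
  rw [hι]
  by_cases h : x = 0
  · rw [dif_pos h, lp.single_apply_ne]
    intro hx; exact y.2 (hx ▸ h)
  · rw [dif_neg h]
    by_cases hx : x = y.1
    · have : (⟨x, h⟩ : {x : Fin n → ℤ // x ≠ 0}) = y := Subtype.ext hx
      rw [this, lp.single_apply_self, hx, lp.single_apply_self]
    · rw [lp.single_apply_ne _ _ _ hx,
        lp.single_apply_ne _ _ _ (fun hc => hx (congrArg Subtype.val hc))]

lemma adjoint_iota_apply {n : ℕ} (ι : Ks n →L[ℂ] Kt n) (hι : IsIota ι)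
    (ψ : Kt n) (y : {x : Fin n → ℤ // x ≠ 0}) :
    (ContinuousLinearMap.adjoint ι ψ) y = ψ y.1 := by
  rw [eval_eq_inner, ContinuousLinearMap.adjoint_inner_right, iota_single ι hι,
    ← eval_eq_inner]

lemma adjoint_iota_iota {n : ℕ} (ι : Ks n →L[ℂ] Kt n) (hι : IsIota ι)
    (φ : Ks n) : ContinuousLinearMap.adjoint ι (ι φ) = φ := by
  apply lp.ext; funext y
  rw [adjoint_iota_apply ι hι, hι, dif_neg y.2]

lemma norm_iota {n : ℕ} (ι : Ks n →L[ℂ] Kt n) (hι : IsIota ι)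
    (φ : Ks n) : ‖ι φ‖ = ‖φ‖ := by
  have h : (inner ℂ (ι φ) (ι φ) : ℂ) = inner ℂ φ φ := by
    rw [← ContinuousLinearMap.adjoint_inner_right, adjoint_iota_iota ι hι]
  have h2 : ‖ι φ‖ ^ 2 = ‖φ‖ ^ 2 := by
    rw [← @inner_self_eq_norm_sq ℂ, ← @inner_self_eq_norm_sq ℂ, h]
  calc ‖ι φ‖ = √(‖ι φ‖ ^ 2) := (Real.sqrt_sq (norm_nonneg _)).symm
    _ = √(‖φ‖ ^ 2) := by rw [h2]
    _ = ‖φ‖ := Real.sqrt_sq (norm_nonneg _)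

lemma shift_single {n : ℕ} (L : Fin n → (Kt n →L[ℂ] Kt n)) (hL : IsShift L)
    (j : Fin n) (x : Fin n → ℤ) :
    L j (lp.single 2 x (1:ℂ)) = lp.single 2 (x - Pi.single j 1) (1:ℂ) := by
  apply lp.ext; funext y
  rw [hL]
  by_cases h : y = x - Pi.single j 1
  · rw [h, lp.single_apply_self, sub_add_cancel, lp.single_apply_self]
  · rw [lp.single_apply_ne _ _ _ h, lp.single_apply_ne]
    intro hc
    exact h (by rw [← hc]; abel)

lemma adjoint_shift_apply {n : ℕ} (L : Fin n → (Kt n →L[ℂ] Kt n)) (hL : IsShift L)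
    (j : Fin n) (ψ : Kt n) (x : Fin n → ℤ) :
    (ContinuousLinearMap.adjoint (L j) ψ) x = ψ (x - Pi.single j 1) := by
  rw [eval_eq_inner, ContinuousLinearMap.adjoint_inner_right, shift_single L hL,
    ← eval_eq_inner]

lemma T0op_apply {n : ℕ} (μv : Fin n → ℂ) (V₀ : ℝ) (L : Fin n → (Kt n →L[ℂ] Kt n))
    (hL : IsShift L) (ψ : Kt n) (x : Fin n → ℤ) :
    (T0op μv V₀ L ψ) x
      = (∑ j, (μv j * ψ (x + Pi.single j 1)
          + conj (μv j) * ψ (x - Pi.single j 1))) + (V₀ : ℂ) * ψ x := by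
  simp only [T0op, ContinuousLinearMap.add_apply, ContinuousLinearMap.sum_apply,
    ContinuousLinearMap.smul_apply, ContinuousLinearMap.id_apply]
  rw [lp.coeFn_add, Pi.add_apply, lp.coeFn_smul, Pi.smul_apply, lp.coeFn_sum,
    Finset.sum_apply]
  congr 1
  · refine Finset.sum_congr rfl fun j _ => ?_
    rw [lp.coeFn_add, Pi.add_apply, lp.coeFn_smul, Pi.smul_apply, lp.coeFn_smul,
      Pi.smul_apply, hL, adjoint_shift_apply L hL]
    rw [smul_eq_mul, smul_eq_mul]

lemma Am_decomp {n : ℕ} (ν : ℝ) (μv : Fin n → ℂ) (V₀ : ℝ) (L : Fin n → (Kt n →L[ℂ] Kt n))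
    (ι : Ks n →L[ℂ] Kt n) (hι : IsIota ι) (φ : Ks n) :
    T0op μv V₀ L (ι φ) - (ν : ℂ) • ι φ
      = ι (Tops μv V₀ L ι φ - (ν : ℂ) • φ)
        + lp.single 2 0 ((T0op μv V₀ L (ι φ) - (ν : ℂ) • ι φ) 0) := by
  apply lp.ext; funext x
  rw [lp.coeFn_add, Pi.add_apply]
  by_cases h : x = 0
  · subst h
    rw [hι, dif_pos rfl, lp.single_apply_self, zero_add]
  · rw [lp.single_apply_ne _ _ _ h, add_zero, hι, dif_neg h,
      lp.coeFn_sub, Pi.sub_apply, lp.coeFn_smul, Pi.smul_apply]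
    have h1 : (Tops μv V₀ L ι φ) ⟨x, h⟩ = (T0op μv V₀ L (ι φ)) x := by
      show ((ContinuousLinearMap.adjoint ι ∘L T0op μv V₀ L ∘L ι) φ) ⟨x, h⟩ = _
      rw [ContinuousLinearMap.comp_apply, ContinuousLinearMap.comp_apply,
        adjoint_iota_apply ι hι]
    rw [lp.coeFn_sub, Pi.sub_apply, lp.coeFn_smul, Pi.smul_apply, h1, hι, dif_neg h]

lemma A0_val {n : ℕ} (ν : ℝ) (μv : Fin n → ℂ) (V₀ : ℝ) (L : Fin n → (Kt n →L[ℂ] Kt n))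
    (hL : IsShift L) (ι : Ks n →L[ℂ] Kt n) (hι : IsIota ι) (φ : Ks n) :
    (T0op μv V₀ L (ι φ) - (ν : ℂ) • ι φ) 0
      = ∑ j, (μv j * φ (eV j) + conj (μv j) * φ (eV' j)) := by
  rw [lp.coeFn_sub, Pi.sub_apply, lp.coeFn_smul, Pi.smul_apply,
    T0op_apply μv V₀ L hL, hι, dif_pos rfl]
  rw [smul_zero, mul_zero, add_zero, sub_zero]
  refine Finset.sum_congr rfl fun j _ => ?_
  have h1 : (ι φ) (0 + Pi.single j 1) = φ (eV j) := by
    rw [zero_add, hι]; exact dif_neg (eV j).2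
  have h2 : (ι φ) (0 - Pi.single j 1) = φ (eV' j) := by
    rw [zero_sub, hι]; exact dif_neg (eV' j).2
  rw [h1, h2]


set_option maxHeartbeats 2000000 in
/-- a normalized weak-null Weyl sequence for `T` at `ν` is mapped
by `ι` to a normalized weak-null Weyl sequence for `T̃₀` at `ν`. -/
theorem stmt_7 (n : ℕ) (hn : 1 ≤ n) (μv : Fin n → ℂ) (V₀ : ℝ)
    (L : Fin n → (Kt n →L[ℂ] Kt n)) (hL : IsShift L)
    (ι : Ks n →L[ℂ] Kt n) (hι : IsIota ι)
    (ν : ℝ) (φseq : ℕ → Ks n)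
    (hnorm : ∀ m, ‖φseq m‖ = 1)
    (hweak : ∀ φ : Ks n, Tendsto (fun m => (inner ℂ φ (φseq m) : ℂ)) atTop (𝓝 0))
    (hWeyl : Tendsto (fun m => ‖Tops μv V₀ L ι (φseq m) - (ν : ℂ) • φseq m‖)
      atTop (𝓝 0)) :
    (∀ m, ‖ι (φseq m)‖ = 1) ∧
    (∀ ψ : Kt n, Tendsto (fun m => (inner ℂ ψ (ι (φseq m)) : ℂ)) atTop (𝓝 0)) ∧
    Tendsto (fun m => ‖T0op μv V₀ L (ι (φseq m)) - (ν : ℂ) • ι (φseq m)‖)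
      atTop (𝓝 0) := by
  refine ⟨fun m => by rw [norm_iota ι hι]; exact hnorm m, ?_, ?_⟩
  · intro ψ
    have := hweak (ContinuousLinearMap.adjoint ι ψ)
    simpa only [ContinuousLinearMap.adjoint_inner_left] using this
  · have hzero : ∀ y : {x : Fin n → ℤ // x ≠ 0},
        Tendsto (fun m => (φseq m : ∀ _ : {x : Fin n → ℤ // x ≠ 0}, ℂ) y) atTop (𝓝 0) := by
      intro y
      exact (hweak (lp.single 2 y 1)).congr fun m => (eval_eq_inner _ _).symm
    have hA0 : Tendsto
        (fun m => ∑ j, (μv j * φseq m (eV j) + conj (μv j) * φseq m (eV' j)))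
        atTop (𝓝 0) := by
      have := tendsto_finset_sum (Finset.univ : Finset (Fin n))
        (fun j _ => (((hzero (eV j)).const_mul (μv j)).add
          ((hzero (eV' j)).const_mul (conj (μv j)))))
      simpa using this
    have hb : ∀ m, ‖T0op μv V₀ L (ι (φseq m)) - (ν : ℂ) • ι (φseq m)‖
        ≤ ‖Tops μv V₀ L ι (φseq m) - (ν : ℂ) • φseq m‖
          + ‖∑ j, (μv j * φseq m (eV j) + conj (μv j) * φseq m (eV' j))‖ := by
      intro m
      set a := Tops μv V₀ L ι (φseq m) - (ν : ℂ) • φseq m with ha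
      set b := T0op μv V₀ L (ι (φseq m)) - (ν : ℂ) • ι (φseq m) with hbdef
      have hd : b = ι a + lp.single 2 (0 : Fin n → ℤ) ((b : ∀ _ : Fin n → ℤ, ℂ) 0) := Am_decomp ν μv V₀ L ι hι (φseq m)
      have h0 : (b : ∀ _ : Fin n → ℤ, ℂ) 0
          = ∑ j, (μv j * φseq m (eV j) + conj (μv j) * φseq m (eV' j)) :=
        A0_val ν μv V₀ L hL ι hι (φseq m)
      have hle := norm_add_le (ι a)
        ((lp.single 2 (0 : Fin n → ℤ) ((b : ∀ _ : Fin n → ℤ, ℂ) 0)) : Kt n)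
      rw [← hd] at hle
      have hs : ‖(lp.single 2 (0 : Fin n → ℤ) ((b : ∀ _ : Fin n → ℤ, ℂ) 0) : Kt n)‖ = ‖(b : ∀ _ : Fin n → ℤ, ℂ) 0‖ :=
        lp.norm_single (E := fun _ : Fin n → ℤ => ℂ) (p := 2) (by norm_num : (0 : ℝ≥0∞) < 2) 0 ((b : ∀ _ : Fin n → ℤ, ℂ) 0)
      rw [norm_iota ι hι, hs, h0] at hle
      exact hle
    have hlim : Tendsto (fun m => ‖Tops μv V₀ L ι (φseq m) - (ν : ℂ) • φseq m‖
        + ‖∑ j, (μv j * φseq m (eV j) + conj (μv j) * φseq m (eV' j))‖) atTop (𝓝 0) := by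
      simpa using hWeyl.add hA0.norm
    exact squeeze_zero (fun m => norm_nonneg _) hb hlim
end
end

section
/- Let l ≥ 1, let ν_1,…,ν_l be strictly positive real numbers, and let ε ∈ (0, 2Σ_{j=1}^l ν_j]. Then the function k ↦ (Σ_{j=1}^l ν_j(1 − cos k_j) − ε/2)^{−2} is not Lebesgue integrable on [0,π)^l, i.e. ∫_{[0,π)^l} |Σ_{j=1}^l ν_j(1 − cos k_j) − ε/2|^{−2} dk = +∞; the same holds with (1 + cos k_j) in place of (1 − cos k_j). -/
open MeasureTheory Real Set
open scoped ENNReal Real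

-- cos is 1-Lipschitz
lemma cos_lip (x y : ℝ) : |Real.cos x - Real.cos y| ≤ |x - y| := by
  rw [Real.cos_sub_cos]
  have h1 : |Real.sin ((x + y) / 2)| ≤ 1 := Real.abs_sin_le_one _
  have h2 : |Real.sin ((x - y) / 2)| ≤ |(x - y) / 2| := Real.abs_sin_le_abs
  have h3 : |(x - y) / 2| = |x - y| / 2 := by rw [abs_div]; norm_num
  calc |(-2) * Real.sin ((x + y) / 2) * Real.sin ((x - y) / 2)|
      = 2 * |Real.sin ((x + y) / 2)| * |Real.sin ((x - y) / 2)| := by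
        rw [abs_mul, abs_mul]; norm_num
    _ ≤ 2 * 1 * (|x - y| / 2) := by
        apply mul_le_mul _ (h3 ▸ h2) (abs_nonneg _) (by norm_num)
        nlinarith [abs_nonneg (Real.sin ((x + y) / 2))]
    _ = |x - y| := by ring

-- core divergence
lemma core_div (a b : ℝ) (ha : 0 < a) (hb : 0 < b) :
    ∫⁻ t in Set.Ioo (0 : ℝ) b, ((ENNReal.ofReal (a * t)) ^ 2)⁻¹ = ⊤ := by
  by_contra h
  have hlt : ∫⁻ t in Set.Ioo (0 : ℝ) b, ((ENNReal.ofReal (a * t)) ^ 2)⁻¹ < ⊤ :=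
    lt_top_iff_ne_top.2 h
  set g : ℝ → ℝ := fun t => ((a * t) ^ 2)⁻¹ with hg
  have hmeas : Measurable g := by fun_prop
  have heq : ∀ᵐ t ∂(volume.restrict (Set.Ioo (0:ℝ) b)),
      ENNReal.ofReal (g t) = ((ENNReal.ofReal (a * t)) ^ 2)⁻¹ := by
    filter_upwards [ae_restrict_mem measurableSet_Ioo] with t ht
    have hat : 0 < a * t := mul_pos ha ht.1
    rw [hg]
    rw [← ENNReal.ofReal_pow hat.le, ← ENNReal.ofReal_inv_of_pos (by positivity)]
  have hfi : HasFiniteIntegral g (volume.restrict (Set.Ioo (0:ℝ) b)) := by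
    rw [hasFiniteIntegral_iff_ofReal]
    · rwa [lintegral_congr_ae heq]
    · filter_upwards [ae_restrict_mem measurableSet_Ioo] with t ht
      positivity
  have hint : IntegrableOn g (Set.Ioo (0:ℝ) b) := ⟨hmeas.aestronglyMeasurable, hfi⟩
  have hint2 : IntegrableOn (fun t : ℝ => t ^ (-2 : ℝ)) (Set.Ioo (0:ℝ) b) := by
    have h0 : IntegrableOn (fun t : ℝ => a ^ 2 * g t) (Set.Ioo (0:ℝ) b) := hint.const_mul (a ^ 2)
    refine h0.congr_fun (fun t ht => ?_) measurableSet_Ioo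
    have ht0 : 0 < t := ht.1
    have htr : (t : ℝ) ^ (-2 : ℝ) = (t ^ 2)⁻¹ := by
      rw [Real.rpow_neg ht0.le, Real.rpow_two]
    rw [htr, hg]
    field_simp
  rw [intervalIntegral.integrableOn_Ioo_rpow_iff hb] at hint2
  linarith

lemma oneD (a d : ℝ) (ha : 0 < a) (hd : |d| < a) :
    ∫⁻ t in Set.Ico (0 : ℝ) π, ((ENNReal.ofReal |a * Real.cos t - d|) ^ 2)⁻¹ = ⊤ := by
  have hda : -1 < d / a ∧ d / a < 1 := by
    rw [abs_lt] at hd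
    constructor
    · rw [neg_lt, ← neg_div]
      exact (div_lt_one ha).2 (by linarith)
    · exact (div_lt_one ha).2 hd.2
  set t0 := Real.arccos (d / a) with ht0def
  have hcos : Real.cos t0 = d / a := Real.cos_arccos hda.1.le hda.2.le
  have ht0pos : 0 < t0 := Real.arccos_pos.2 hda.2
  have ht0pi : t0 < π := by
    rcases lt_or_eq_of_le (Real.arccos_le_pi (d / a)) with h | h
    · exact h
    · exact absurd (Real.arccos_eq_pi.1 h) (by linarith [hda.1])
  -- lower bound on Ioo t0 π
  have hmono : ∫⁻ t in Set.Ioo t0 π, ((ENNReal.ofReal (a * (t - t0))) ^ 2)⁻¹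
      ≤ ∫⁻ t in Set.Ico (0 : ℝ) π, ((ENNReal.ofReal |a * Real.cos t - d|) ^ 2)⁻¹ := by
    have hsub : Set.Ioo t0 π ⊆ Set.Ico (0:ℝ) π := fun t ht =>
      ⟨le_of_lt (lt_of_le_of_lt ht0pos.le ht.1), ht.2⟩
    refine le_trans ?_ (lintegral_mono_set hsub)
    refine setLIntegral_mono' measurableSet_Ioo (fun t ht => ?_)
    have key : |a * Real.cos t - d| ≤ a * (t - t0) := by
      have : a * Real.cos t - d = a * (Real.cos t - Real.cos t0) := by
        rw [hcos]; field_simp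
      rw [this, abs_mul, abs_of_pos ha]
      refine mul_le_mul_of_nonneg_left ?_ ha.le
      calc |Real.cos t - Real.cos t0| ≤ |t - t0| := cos_lip t t0
        _ = t - t0 := abs_of_pos (by linarith [ht.1])
    exact ENNReal.inv_le_inv.2 (pow_le_pow_left₀ zero_le (ENNReal.ofReal_le_ofReal key) 2)
  -- translation
  have htrans : ∫⁻ t in Set.Ioo t0 π, ((ENNReal.ofReal (a * (t - t0))) ^ 2)⁻¹ = ⊤ := by
    have mp : MeasurePreserving (fun x : ℝ => x + t0) volume volume :=
      measurePreserving_add_right volume t0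
    have emb : MeasurableEmbedding (fun x : ℝ => x + t0) :=
      (Homeomorph.addRight t0).measurableEmbedding
    have hpre : (fun x : ℝ => x + t0) ⁻¹' Set.Ioo t0 π = Set.Ioo 0 (π - t0) := by
      ext x
      simp only [Set.mem_preimage, Set.mem_Ioo]
      constructor <;> (rintro ⟨h1, h2⟩; exact ⟨by linarith, by linarith⟩)
    have := mp.setLIntegral_comp_preimage_emb emb
      (fun t => ((ENNReal.ofReal (a * (t - t0))) ^ 2)⁻¹) (Set.Ioo t0 π)
    rw [← this, hpre]
    have : ∀ x : ℝ, ((ENNReal.ofReal (a * (x + t0 - t0))) ^ 2)⁻¹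
        = ((ENNReal.ofReal (a * x)) ^ 2)⁻¹ := fun x => by rw [add_sub_cancel_right]
    simp only [this]
    exact core_div a (π - t0) ha (by linarith)
  rw [eq_top_iff, ← htrans]
  exact hmono



lemma keyD (n : ℕ) (ν : Fin (n + 1) → ℝ) (hν : ∀ j, 0 < ν j) (s : ℝ)
    (hs : s = 1 ∨ s = -1) (ε : ℝ) (hε0 : 0 < ε) (hε2 : ε ≤ 2 * ∑ j, ν j) :
    ∫⁻ k in Set.pi Set.univ (fun _ : Fin (n + 1) => Set.Ico (0 : ℝ) π),
        ((ENNReal.ofReal |∑ j, ν j * (1 + s * Real.cos (k j)) - ε / 2|) ^ 2)⁻¹ = ⊤ := by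
  have hsabs : |s| = 1 := by rcases hs with h | h <;> rw [h] <;> norm_num
  set F : (Fin (n + 1) → ℝ) → ℝ≥0∞ := fun k =>
    ((ENNReal.ofReal |∑ j, ν j * (1 + s * Real.cos (k j)) - ε / 2|) ^ 2)⁻¹ with hF
  set e := MeasurableEquiv.piFinSuccAbove (fun _ : Fin (n + 1) => ℝ) 0 with he
  have hsymm : ∀ (x : ℝ) (y : Fin n → ℝ), e.symm (x, y) = Fin.cons x y := by
    intro x y
    simp [he, MeasurableEquiv.piFinSuccAbove, Fin.insertNthEquiv_zero, Fin.consEquiv]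
  have hgcont : Continuous (fun k : Fin (n + 1) → ℝ =>
      ∑ j, ν j * (1 + s * Real.cos (k j)) - ε / 2) := by
    apply Continuous.sub _ continuous_const
    apply continuous_finset_sum
    intro j _
    exact continuous_const.mul (continuous_const.add (continuous_const.mul
      (Real.continuous_cos.comp (continuous_apply j))))
  have hFmeas : Measurable F := by
    rw [hF]
    exact (((ENNReal.measurable_ofReal.comp (hgcont.abs.measurable)).pow_const 2).inv)
  rw [volume_pi]
  have mp := (measurePreserving_piFinSuccAbove (fun _ : Fin (n + 1) => (volume : Measure ℝ)) 0).symm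
  have emb : MeasurableEmbedding (e.symm : ℝ × (Fin n → ℝ) → (Fin (n + 1) → ℝ)) :=
    e.symm.measurableEmbedding
  rw [← mp.setLIntegral_comp_preimage_emb emb F _]
  have hpre : (e.symm : ℝ × (Fin n → ℝ) → (Fin (n + 1) → ℝ)) ⁻¹'
      (Set.pi Set.univ fun _ : Fin (n + 1) => Set.Ico (0 : ℝ) π)
      = (Set.Ico (0 : ℝ) π) ×ˢ (Set.pi Set.univ fun _ : Fin n => Set.Ico (0 : ℝ) π) := by
    ext ⟨x, y⟩
    simp only [Set.mem_preimage, Set.mem_pi, Set.mem_univ, forall_true_left, Set.mem_prod, hsymm]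
    constructor
    · intro h
      exact ⟨h 0, fun j => by simpa using h j.succ⟩
    · rintro ⟨h0, h1⟩ j
      refine Fin.cases ?_ ?_ j
      · simpa using h0
      · intro i; simpa using h1 i
  rw [hpre, ← Measure.prod_restrict]
  rw [lintegral_prod_symm' (fun z : ℝ × (Fin n → ℝ) => F (e.symm z)) (hFmeas.comp e.symm.measurable)]
  set T : (Fin n → ℝ) → ℝ := fun y => ∑ j : Fin n,
    ν (Fin.succ j) * (1 + s * Real.cos (y j)) with hT
  have hTcont : Continuous T := by
    apply continuous_finset_sum
    intro j _
    exact continuous_const.mul (continuous_const.add (continuous_const.mul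
      (Real.continuous_cos.comp (continuous_apply j))))
  have hinner : ∀ y : Fin n → ℝ, |ε / 2 - T y - ν 0| < ν 0 →
      (∫⁻ x in Set.Ico (0 : ℝ) π, F (e.symm (x, y))) = ⊤ := by
    intro y hy
    set d : ℝ := s * (ε / 2 - T y - ν 0) with hd
    have hdabs : |d| < ν 0 := by
      rw [hd, abs_mul, hsabs, one_mul]; exact hy
    have hcongr : ∀ x : ℝ, F (e.symm (x, y))
        = ((ENNReal.ofReal |ν 0 * Real.cos x - d|) ^ 2)⁻¹ := by
      intro x
      have hsum : ∑ j, ν j * (1 + s * Real.cos ((e.symm (x, y)) j))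
          = ν 0 * (1 + s * Real.cos x) + T y := by
        rw [hsymm, Fin.sum_univ_succ]
        simp [hT]
      rw [hF]
      simp only [hsum]
      congr 2
      have hexpr : ν 0 * (1 + s * Real.cos x) + T y - ε / 2
          = s * (ν 0 * Real.cos x - d) := by
        rw [hd]; rcases hs with h | h <;> rw [h] <;> ring
      rw [hexpr, abs_mul, hsabs, one_mul]
    simp only [hcongr]
    exact oneD (ν 0) d (hν 0) hdabs
  set U : Set (Fin n → ℝ) := (Set.pi Set.univ fun _ : Fin n => Set.Ioo (0 : ℝ) π)
      ∩ {y | |ε / 2 - T y - ν 0| < ν 0} with hU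
  have hUopen : IsOpen U := by
    apply IsOpen.inter
    · exact isOpen_set_pi Set.finite_univ (fun _ _ => isOpen_Ioo)
    · have h1 : {y | |ε / 2 - T y - ν 0| < ν 0}
          = (fun y => |ε / 2 - T y - ν 0|) ⁻¹' (Set.Iio (ν 0)) := rfl
      rw [h1]
      exact IsOpen.preimage (((continuous_const.sub hTcont).sub continuous_const).abs) isOpen_Iio
  have hUne : U.Nonempty := by
    rcases Nat.eq_zero_or_pos n with hn | hn
    · subst hn
      refine ⟨fun j => j.elim0, ?_, ?_⟩
      · simp
      · have hT0 : T (fun j => j.elim0) = 0 := by simp [hT]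
        have hν0 : ε / 2 ≤ ν 0 := by
          have h2 : ∑ j, ν j = ν 0 := by simp [Fin.sum_univ_one]
          rw [h2] at hε2; linarith
        simp only [Set.mem_setOf_eq, hT0]
        rw [abs_lt]; constructor <;> [linarith [hν 0]; linarith [hν 0]]
    · set S : ℝ := ∑ j : Fin n, ν (Fin.succ j) with hS
      have hSpos : 0 < S := Finset.sum_pos (fun j _ => hν _)
        (Finset.univ_nonempty_iff.2 (Fin.pos_iff_nonempty.1 hn))
      have hsum : ∑ j, ν j = ν 0 + S := Fin.sum_univ_succ ν
      set v : ℝ := (max (ε / 2 - 2 * ν 0) 0 + min (ε / 2) (2 * S)) / 2 with hv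
      have hlo : max (ε / 2 - 2 * ν 0) 0 < min (ε / 2) (2 * S) := by
        rw [max_lt_iff, lt_min_iff, lt_min_iff]
        have hν0 := hν 0
        refine ⟨⟨by linarith, by rw [hsum] at hε2; linarith⟩, by linarith, by linarith⟩
      have hv1 : max (ε / 2 - 2 * ν 0) 0 < v := by rw [hv]; linarith
      have hv2 : v < min (ε / 2) (2 * S) := by rw [hv]; linarith
      have hv0 : 0 < v := lt_of_le_of_lt (le_max_right _ _) hv1
      have hvS : v < 2 * S := lt_of_lt_of_le hv2 (min_le_right _ _)
      have hva : ε / 2 - 2 * ν 0 < v := lt_of_le_of_lt (le_max_left _ _) hv1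
      have hvb : v < ε / 2 := lt_of_lt_of_le hv2 (min_le_left _ _)
      set c : ℝ := s * (v / S - 1) with hc
      have hvS1 : 0 < v / S := div_pos hv0 hSpos
      have hvS2 : v / S < 2 := (div_lt_iff₀ hSpos).2 (by linarith)
      have hcabs : -1 < c ∧ c < 1 := by
        have : |c| < 1 := by
          rw [hc, abs_mul, hsabs, one_mul, abs_lt]
          constructor <;> [linarith; linarith]
        exact abs_lt.1 this
      set t : ℝ := Real.arccos c with ht
      have hcost : Real.cos t = c := Real.cos_arccos hcabs.1.le hcabs.2.le
      have htpos : 0 < t := Real.arccos_pos.2 hcabs.2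
      have htpi : t < π := by
        rcases lt_or_eq_of_le (Real.arccos_le_pi c) with h | h
        · exact h
        · exact absurd (Real.arccos_eq_pi.1 h) (by linarith [hcabs.1])
      refine ⟨fun _ => t, ?_, ?_⟩
      · intro j _; exact ⟨htpos, htpi⟩
      · have hTy : T (fun _ => t) = v := by
          rw [hT]
          have h3 : ∀ j : Fin n, ν (Fin.succ j) * (1 + s * Real.cos t)
              = ν (Fin.succ j) * (v / S) := by
            intro j
            congr 1
            rw [hcost, hc]
            rcases hs with h | h <;> rw [h] <;> ring
          simp only [h3, ← Finset.sum_mul]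
          rw [← hS]
          field_simp
        simp only [Set.mem_setOf_eq, hTy]
        rw [abs_lt]
        constructor <;> [linarith; linarith]
  -- conclude
  have hUmeas : MeasurableSet U := hUopen.measurableSet
  have hUsub : U ⊆ Set.pi Set.univ fun _ : Fin n => Set.Ico (0 : ℝ) π := by
    intro y hy j _
    have := hy.1 j (Set.mem_univ j)
    exact ⟨this.1.le, this.2⟩
  have hUpos : 0 < Measure.pi (fun _ : Fin n => (volume : Measure ℝ)) U := by
    rw [← volume_pi]
    exact hUopen.measure_pos volume hUne
  rw [eq_top_iff]
  calc (⊤ : ℝ≥0∞) = ⊤ * Measure.pi (fun _ : Fin n => (volume : Measure ℝ)) U := by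
        rw [ENNReal.top_mul hUpos.ne']
    _ = ∫⁻ y in U, ⊤ ∂(Measure.pi fun _ : Fin n => (volume : Measure ℝ)) := by
        rw [setLIntegral_const]
    _ = ∫⁻ y in U, (∫⁻ x in Set.Ico (0 : ℝ) π, F (e.symm (x, y)))
          ∂(Measure.pi fun _ : Fin n => (volume : Measure ℝ)) := by
        refine (setLIntegral_congr_fun hUmeas ?_).symm
        intro y hy
        exact hinner y hy.2
    _ ≤ ∫⁻ y in Set.pi Set.univ (fun _ : Fin n => Set.Ico (0 : ℝ) π),
          (∫⁻ x in Set.Ico (0 : ℝ) π, F (e.symm (x, y)))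
          ∂(Measure.pi fun _ : Fin n => (volume : Measure ℝ)) :=
        lintegral_mono_set hUsub

/-- for positive `ν₁,…,ν_l` and `ε ∈ (0, 2Σνⱼ]`, the function
`k ↦ (Σⱼ νⱼ(1 ∓ cos kⱼ) - ε/2)⁻²` is not Lebesgue integrable on `[0,π)^l`. -/
theorem stmt_11 (l : ℕ) (hl : 1 ≤ l) (ν : Fin l → ℝ) (hν : ∀ j, 0 < ν j)
    (ε : ℝ) (hε : ε ∈ Set.Ioc 0 (2 * ∑ j, ν j)) :
    (∫⁻ k in Set.pi Set.univ (fun _ : Fin l => Set.Ico (0 : ℝ) π),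
        ((ENNReal.ofReal |∑ j, ν j * (1 - Real.cos (k j)) - ε / 2|) ^ 2)⁻¹ = ⊤) ∧
    (∫⁻ k in Set.pi Set.univ (fun _ : Fin l => Set.Ico (0 : ℝ) π),
        ((ENNReal.ofReal |∑ j, ν j * (1 + Real.cos (k j)) - ε / 2|) ^ 2)⁻¹ = ⊤) := by
  obtain ⟨n, rfl⟩ : ∃ n, l = n + 1 := ⟨l - 1, (Nat.succ_pred_eq_of_pos hl).symm⟩
  have h1 := keyD n ν hν (-1) (Or.inr rfl) ε hε.1 hε.2
  have h2 := keyD n ν hν 1 (Or.inl rfl) ε hε.1 hε.2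
  constructor
  · simp only [neg_one_mul, ← sub_eq_add_neg] at h1
    exact h1
  · simp only [one_mul] at h2
    exact h2
end

section
/- Assume μ ≠ 0 and let λ ∈ (V₀ − 2μ, V₀ + 2μ). Then the function k ↦ ( 2Σ_{j=1}^n |μ_j| cos k_j + V₀ − λ )^{−1} is not square-integrable on [0,2π)ⁿ: ∫_{[0,2π)^n} | 2Σ_{j=1}^n |μ_j| cos k_j + V₀ − λ |^{−2} dk = +∞. -/
set_option maxHeartbeats 1000000
open MeasureTheory
open scoped ENNReal Real

private lemma cos_lip_s12 (a b : ℝ) : |Real.cos a - Real.cos b| ≤ |a - b| := by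
  rw [Real.cos_sub_cos, abs_mul, abs_mul]
  have h1 : |(-2 : ℝ)| = 2 := by norm_num
  rw [h1]
  have h2 : |Real.sin ((a+b)/2)| ≤ 1 := Real.abs_sin_le_one _
  have h3 : |Real.sin ((a-b)/2)| ≤ |(a-b)/2| := Real.abs_sin_le_abs
  have h4 : |(a-b)/2| = |a-b|/2 := by rw [abs_div]; norm_num
  nlinarith [abs_nonneg (Real.sin ((a-b)/2)), abs_nonneg (a-b), abs_nonneg (Real.sin ((a+b)/2))]

private lemma key1 (C u v : ℝ) (hC : 0 < C) (huv : u < v) :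
    ∫⁻ x in Set.Ioo u v, ((ENNReal.ofReal (C * |x - u|)) ^ 2)⁻¹ = ⊤ := by
  by_contra h
  set I := ∫⁻ x in Set.Ioo u v, ((ENNReal.ofReal (C * |x - u|)) ^ 2)⁻¹ with hI
  have hIlt : I ≠ ⊤ := h
  set M : ℝ := I.toReal + 1 with hM
  have hM1 : (1:ℝ) ≤ M := by
    have := ENNReal.toReal_nonneg (a := I); linarith
  have hM0 : 0 < M := by linarith
  set r : ℝ := min (v - u) (1 / (C^2 * M)) with hr
  have hr0 : 0 < r := lt_min (by linarith) (by positivity)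
  have hrle : r ≤ v - u := min_le_left _ _
  have hrle2 : r ≤ 1 / (C^2 * M) := min_le_right _ _
  have hmeas : Measurable fun x : ℝ => ((ENNReal.ofReal (C * |x - u|)) ^ 2)⁻¹ := by
    fun_prop
  have step1 : ∫⁻ x in Set.Ioo u (u + r), ((ENNReal.ofReal (C * r)) ^ 2)⁻¹ ≤
      ∫⁻ x in Set.Ioo u (u + r), ((ENNReal.ofReal (C * |x - u|)) ^ 2)⁻¹ := by
    refine setLIntegral_mono hmeas ?_
    intro x hx
    have hx1 : |x - u| ≤ r := by
      rw [abs_of_pos (by linarith [hx.1] : (0:ℝ) < x - u)]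
      linarith [hx.2]
    have : ENNReal.ofReal (C * |x - u|) ≤ ENNReal.ofReal (C * r) :=
      ENNReal.ofReal_le_ofReal (by nlinarith [abs_nonneg (x - u)])
    exact ENNReal.inv_le_inv.mpr (pow_le_pow_left₀ zero_le this 2)
  have step2 : ∫⁻ x in Set.Ioo u (u + r), ((ENNReal.ofReal (C * r)) ^ 2)⁻¹
      = ENNReal.ofReal (((C * r)^2)⁻¹ * r) := by
    rw [setLIntegral_const, Real.volume_Ioo]
    rw [← ENNReal.ofReal_pow (by positivity), ← ENNReal.ofReal_inv_of_pos (by positivity)]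
    rw [← ENNReal.ofReal_mul (by positivity)]
    ring_nf
  have step3 : ∫⁻ x in Set.Ioo u (u + r), ((ENNReal.ofReal (C * |x - u|)) ^ 2)⁻¹ ≤ I := by
    rw [hI]; exact lintegral_mono_set (Set.Ioo_subset_Ioo le_rfl (by linarith))
  have hMle : M ≤ ((C * r)^2)⁻¹ * r := by
    have h1 : ((C * r)^2)⁻¹ * r = 1 / (C^2 * r) := by field_simp
    rw [h1]
    rw [le_div_iff₀ (by positivity)]
    calc M * (C^2 * r) ≤ M * (C^2 * (1 / (C^2 * M))) := by
          apply mul_le_mul_of_nonneg_left _ hM0.le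
          exact mul_le_mul_of_nonneg_left hrle2 (by positivity)
      _ = 1 := by field_simp
  have hfin : ENNReal.ofReal M ≤ I :=
    le_trans (le_trans (ENNReal.ofReal_le_ofReal hMle) (le_of_eq step2.symm))
      (le_trans step1 step3)
  have hcontra : I < ENNReal.ofReal M := by
    rw [hM]
    calc I = ENNReal.ofReal I.toReal := (ENNReal.ofReal_toReal hIlt).symm
      _ < ENNReal.ofReal (I.toReal + 1) := by
          apply (ENNReal.ofReal_lt_ofReal_iff (by linarith [ENNReal.toReal_nonneg (a:=I)])).2
          linarith
  exact absurd hfin hcontra.not_ge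

private lemma main_aux (n : ℕ) (a : Fin n → ℝ) (ha : ∀ j, 0 ≤ a j) (V₀ lam : ℝ)
    (hS : 0 < ∑ j, a j)
    (hl1 : V₀ - 2 * ∑ j, a j < lam) (hl2 : lam < V₀ + 2 * ∑ j, a j) :
    ∫⁻ k in Set.pi Set.univ (fun _ : Fin n => Set.Ico (0 : ℝ) (2 * π)),
        ((ENNReal.ofReal
          |2 * ∑ j, a j * Real.cos (k j) + V₀ - lam|) ^ 2)⁻¹ = ⊤ := by
  classical
  set S := ∑ j, a j with hSdef
  set c := V₀ - lam with hcdef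
  have hc1 : -(2*S) < c := by rw [hcdef]; linarith
  have hc2 : c < 2*S := by rw [hcdef]; linarith
  set q := -c / (2*S) with hqdef
  have hq2 : q < 1 := by
    rw [hqdef, div_lt_one (by linarith)]; linarith
  have hq1 : -1 < q := by
    rw [hqdef, lt_div_iff₀ (by linarith)]; linarith
  set t := Real.arccos q with htdef
  have hcost : Real.cos t = q := Real.cos_arccos hq1.le hq2.le
  have ht0 : 0 < t := by rw [htdef]; exact Real.arccos_pos.2 hq2
  have htpi : t < π := by
    refine lt_of_le_of_ne (htdef ▸ Real.arccos_le_pi q) ?_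
    intro he
    rw [he, Real.cos_pi] at hcost
    linarith
  obtain ⟨j0, -, hj0⟩ : ∃ j ∈ Finset.univ, a j ≠ 0 := by
    refine Finset.exists_ne_zero_of_sum_ne_zero ?_
    rw [← hSdef]; exact hS.ne'
  have haj0 : 0 < a j0 := lt_of_le_of_ne (ha j0) (Ne.symm hj0)
  set δ := min t (π - t) / 2 with hδdef
  have hδ0 : 0 < δ := by
    rw [hδdef]; exact div_pos (lt_min ht0 (by linarith)) two_pos
  have hδt : δ < t := by
    have h := min_le_left t (π - t)
    rw [hδdef]; linarith
  have h2δ : t + 2*δ ≤ π := by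
    have h := min_le_right t (π - t)
    rw [hδdef]; linarith
  have hm1 : Real.cos t < Real.cos (t - δ) :=
    Real.cos_lt_cos_of_nonneg_of_le_pi (by linarith) (by linarith) (by linarith)
  have hm2 : Real.cos (t + δ) < Real.cos t :=
    Real.cos_lt_cos_of_nonneg_of_le_pi (by linarith) (by linarith) (by linarith)
  set m := min (Real.cos (t-δ) - Real.cos t) (Real.cos t - Real.cos (t+δ)) with hmdef
  have hm0 : 0 < m := lt_min (by linarith) (by linarith)
  set ε := min δ (a j0 * m / (2*S)) with hεdef
  have hε0 : 0 < ε := lt_min hδ0 (by positivity)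
  have hεδ : ε ≤ δ := min_le_left _ _
  have hε2 : S * ε ≤ a j0 * m / 2 := by
    have h := min_le_right δ (a j0 * m / (2*S))
    have h2 : S * ε ≤ S * (a j0 * m / (2*S)) :=
      mul_le_mul_of_nonneg_left (hεdef ▸ h) (by linarith)
    have h3 : S * (a j0 * m / (2*S)) = a j0 * m / 2 := by
      field_simp
    linarith
  -- the function
  set f : (Fin n → ℝ) → ℝ := fun k => 2 * ∑ j, a j * Real.cos (k j) + V₀ - lam with hfdef
  have hsplit : ∀ (x : Fin n → ℝ) (u : ℝ), f (Function.update x j0 u) =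
      2 * (a j0 * Real.cos u + ∑ j ∈ Finset.univ.erase j0, a j * Real.cos (x j)) + V₀ - lam := by
    intro x u
    have h : ∑ j, a j * Real.cos (Function.update x j0 u j)
        = a j0 * Real.cos u + ∑ j ∈ Finset.univ.erase j0, a j * Real.cos (x j) := by
      rw [← Finset.add_sum_erase _ (fun j => a j * Real.cos (Function.update x j0 u j))
        (Finset.mem_univ j0), Function.update_self]
      congr 1
      refine Finset.sum_congr rfl fun j hj => ?_
      rw [Function.update_of_ne (Finset.ne_of_mem_erase hj)]
    rw [hfdef]
    simp only []
    rw [h]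
  have hzero : 2 * (a j0 * Real.cos t + ∑ j ∈ Finset.univ.erase j0, a j * Real.cos t)
      + V₀ - lam = 0 := by
    have hsum : a j0 * Real.cos t + ∑ j ∈ Finset.univ.erase j0, a j * Real.cos t
        = S * Real.cos t := by
      rw [Finset.add_sum_erase _ (fun j => a j * Real.cos t) (Finset.mem_univ j0)]
      rw [hSdef, Finset.sum_mul]
    rw [hsum, hcost]
    have : S * q = -c / 2 := by
      rw [hqdef]; field_simp
    rw [this, hcdef]; ring
  -- the sets
  set J : Fin n → Set ℝ :=
    fun j => if j = j0 then Set.Icc (t-δ) (t+2*δ) else Set.Icc (t-ε) (t+ε) with hJdef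
  set B : Set (Fin n → ℝ) := Set.pi Set.univ J with hBdef
  set G : (Fin n → ℝ) → ℝ≥0∞ := fun k => ((ENNReal.ofReal |f k|) ^ 2)⁻¹ with hGdef
  have hGmeas : Measurable G := by
    rw [hGdef]
    have hf : Continuous f := by
      rw [hfdef]
      refine (Continuous.add ?_ continuous_const).sub continuous_const
      refine Continuous.mul continuous_const ?_
      exact continuous_finset_sum _ fun j _ =>
        continuous_const.mul (Real.continuous_cos.comp (continuous_apply j))
    exact (((ENNReal.measurable_ofReal.comp hf.abs.measurable).pow_const 2).inv)
  have hBmeas : MeasurableSet B := by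
    rw [hBdef]
    refine MeasurableSet.univ_pi fun j => ?_
    rw [hJdef]
    by_cases hj : j = j0 <;> simp [hj, measurableSet_Icc]
  -- inner slice integral is infinite
  have hinner : ∀ x : Fin n → ℝ, (∀ j, j ≠ j0 → x j ∈ Set.Icc (t-ε) (t+ε)) →
      (∫⁻ u, B.indicator G (Function.update x j0 u)) = ⊤ := by
    intro x hx
    set E := ∑ j ∈ Finset.univ.erase j0, a j * Real.cos (x j) with hEdef
    set E0 := ∑ j ∈ Finset.univ.erase j0, a j * Real.cos t with hE0def
    have hEdiff : |E - E0| ≤ S * ε := by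
      rw [hEdef, hE0def, ← Finset.sum_sub_distrib]
      refine le_trans (Finset.abs_sum_le_sum_abs _ _) ?_
      have hterm : ∀ j ∈ Finset.univ.erase j0,
          |a j * Real.cos (x j) - a j * Real.cos t| ≤ a j * ε := by
        intro j hj
        rw [← mul_sub, abs_mul, abs_of_nonneg (ha j)]
        refine mul_le_mul_of_nonneg_left ?_ (ha j)
        refine le_trans (cos_lip_s12 _ _) ?_
        have hxj := hx j (Finset.ne_of_mem_erase hj)
        rw [abs_le]
        exact ⟨by linarith [hxj.1], by linarith [hxj.2]⟩
      refine le_trans (Finset.sum_le_sum hterm) ?_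
      rw [← Finset.sum_mul]
      have hsub : ∑ j ∈ Finset.univ.erase j0, a j ≤ S := by
        rw [hSdef]
        exact Finset.sum_le_sum_of_subset_of_nonneg (Finset.subset_univ _) fun j _ _ => ha j
      exact mul_le_mul_of_nonneg_right hsub hε0.le
    have hz2 : 2 * (a j0 * Real.cos t + E0) + V₀ - lam = 0 := hzero
    have hlow : a j0 * m ≤ f (Function.update x j0 (t - δ)) := by
      rw [hsplit, ← hEdef]
      have hA : a j0 * m ≤ a j0 * Real.cos (t-δ) - a j0 * Real.cos t := by
        have := mul_le_mul_of_nonneg_left (min_le_left (Real.cos (t-δ) - Real.cos t)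
          (Real.cos t - Real.cos (t+δ))) haj0.le
        rw [← hmdef] at this
        nlinarith
      have hB := abs_le.1 hEdiff
      linarith [hB.1, hB.2]
    have hhigh : f (Function.update x j0 (t + δ)) ≤ -(a j0 * m) := by
      rw [hsplit, ← hEdef]
      have hA : a j0 * m ≤ a j0 * Real.cos t - a j0 * Real.cos (t+δ) := by
        have := mul_le_mul_of_nonneg_left (min_le_right (Real.cos (t-δ) - Real.cos t)
          (Real.cos t - Real.cos (t+δ))) haj0.le
        rw [← hmdef] at this
        nlinarith
      have hB := abs_le.1 hEdiff
      linarith [hB.1, hB.2]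
    have hcont : Continuous (fun u => f (Function.update x j0 u)) := by
      have he : (fun u => f (Function.update x j0 u))
          = fun u => 2 * (a j0 * Real.cos u + E) + V₀ - lam := by
        funext u; rw [hsplit, ← hEdef]
      rw [he]
      fun_prop
    obtain ⟨s0, hs0mem, hs0⟩ : ∃ s0 ∈ Set.Icc (t-δ) (t+δ),
        (fun u => f (Function.update x j0 u)) s0 = 0 := by
      have hmem0 : (0:ℝ) ∈ Set.Icc (f (Function.update x j0 (t+δ)))
          (f (Function.update x j0 (t-δ))) :=
        ⟨by linarith [mul_pos haj0 hm0], by linarith [mul_pos haj0 hm0]⟩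
      exact intermediate_value_Icc' (by linarith) hcont.continuousOn hmem0
    have hs0' : 2 * (a j0 * Real.cos s0 + E) + V₀ - lam = 0 := by
      have h : f (Function.update x j0 s0) = 0 := hs0
      rw [hsplit x s0, ← hEdef] at h
      exact h
    have hlip : ∀ u : ℝ, |f (Function.update x j0 u)| ≤ 2 * a j0 * |u - s0| := by
      intro u
      have h1 : f (Function.update x j0 u) = 2 * a j0 * (Real.cos u - Real.cos s0) := by
        have e1 := hsplit x u
        rw [← hEdef] at e1
        linear_combination e1 + hs0'
      rw [h1, abs_mul, abs_of_nonneg (by positivity : (0:ℝ) ≤ 2 * a j0)]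
      exact mul_le_mul_of_nonneg_left (cos_lip_s12 u s0) (by positivity)
    rw [eq_top_iff]
    have hkey := key1 (2 * a j0) s0 (t + 2*δ) (by positivity)
      (by have := hs0mem.2; linarith)
    calc (⊤:ℝ≥0∞) = ∫⁻ u in Set.Ioo s0 (t+2*δ),
          ((ENNReal.ofReal (2 * a j0 * |u - s0|)) ^ 2)⁻¹ := hkey.symm
      _ = ∫⁻ u, (Set.Ioo s0 (t+2*δ)).indicator
          (fun u => ((ENNReal.ofReal (2 * a j0 * |u - s0|)) ^ 2)⁻¹) u := by
          rw [lintegral_indicator measurableSet_Ioo]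
      _ ≤ ∫⁻ u, B.indicator G (Function.update x j0 u) := by
          refine lintegral_mono fun u => ?_
          by_cases hu : u ∈ Set.Ioo s0 (t+2*δ)
          · rw [Set.indicator_of_mem hu]
            have hmemB : Function.update x j0 u ∈ B := by
              rw [hBdef]
              refine Set.mem_univ_pi.2 fun j => ?_
              by_cases hj : j = j0
              · subst hj
                rw [Function.update_self, hJdef]
                simp only [if_pos rfl]
                exact ⟨by linarith [hu.1, hs0mem.1], hu.2.le⟩
              · rw [Function.update_of_ne hj, hJdef]
                simp only [if_neg hj]
                exact hx j hj
            rw [Set.indicator_of_mem hmemB, hGdef]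
            have hle : ENNReal.ofReal |f (Function.update x j0 u)|
                ≤ ENNReal.ofReal (2 * a j0 * |u - s0|) :=
              ENNReal.ofReal_le_ofReal (hlip u)
            exact ENNReal.inv_le_inv.mpr (pow_le_pow_left₀ zero_le hle 2)
          · rw [Set.indicator_of_notMem hu]
            exact zero_le
  -- main computation
  have hFmeas : Measurable (B.indicator G) := hGmeas.indicator hBmeas
  have hmain : ∫⁻ k, B.indicator G k = ⊤ := by
    rw [MeasureTheory.volume_pi, lintegral_eq_lmarginal_univ (fun _ => t)]
    rw [lmarginal_erase' _ hFmeas (Finset.mem_univ j0)]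
    rw [eq_top_iff]
    set P : Set (Fin n → ℝ) :=
      Set.pi (↑(Finset.univ.erase j0)) (fun _ => Set.Icc (t-ε) (t+ε)) with hPdef
    have hPle : P.indicator (fun _ => (⊤:ℝ≥0∞)) ≤
        fun x => ∫⁻ u, B.indicator G (Function.update x j0 u) := by
      intro x
      by_cases hxP : x ∈ P
      · rw [Set.indicator_of_mem hxP]
        exact (hinner x (fun j hj => hxP j (by simp [Finset.mem_erase, hj]))).ge
      · rw [Set.indicator_of_notMem hxP]
        exact zero_le
    refine le_trans ?_ (lmarginal_mono hPle _)
    rw [lmarginal]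
    have heq : ∀ y : (i : (Finset.univ.erase j0 : Finset (Fin n))) → ℝ,
        P.indicator (fun _ => (⊤:ℝ≥0∞))
          (Function.updateFinset (fun _ => t) (Finset.univ.erase j0) y)
        = (Set.pi Set.univ fun _ : (Finset.univ.erase j0 : Finset (Fin n)) =>
            Set.Icc (t-ε) (t+ε)).indicator (fun _ => (⊤:ℝ≥0∞)) y := by
      intro y
      have hmemiff : Function.updateFinset (fun _ => t) (Finset.univ.erase j0) y ∈ P
          ↔ y ∈ Set.pi Set.univ
            (fun _ : (Finset.univ.erase j0 : Finset (Fin n)) => Set.Icc (t-ε) (t+ε)) := by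
        constructor
        · intro h i _
          have h2 := h (i : Fin n) (by exact_mod_cast i.2)
          simp only [Function.updateFinset] at h2
          rwa [dif_pos i.2] at h2
        · intro h j hj
          have hj' : j ∈ Finset.univ.erase j0 := by exact_mod_cast hj
          show Function.updateFinset (fun _ => t) (Finset.univ.erase j0) y j ∈ _
          simp only [Function.updateFinset]
          rw [dif_pos hj']
          exact h ⟨j, hj'⟩ (Set.mem_univ _)
      by_cases hmem : Function.updateFinset (fun _ => t) (Finset.univ.erase j0) y ∈ P
      · rw [Set.indicator_of_mem hmem, Set.indicator_of_mem (hmemiff.1 hmem)]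
      · rw [Set.indicator_of_notMem hmem,
          Set.indicator_of_notMem (fun hc => hmem (hmemiff.2 hc))]
    simp_rw [heq]
    rw [lintegral_indicator_const (MeasurableSet.univ_pi fun _ => measurableSet_Icc)]
    rw [Measure.pi_pi]
    rw [ENNReal.top_mul]
    · refine Finset.prod_ne_zero_iff.2 fun i _ => ?_
      rw [Real.volume_Icc, Ne, ENNReal.ofReal_eq_zero, not_le]
      linarith
  -- conclude
  have hBA : B ⊆ Set.pi Set.univ (fun _ : Fin n => Set.Ico (0 : ℝ) (2 * π)) := by
    intro k hk
    refine Set.mem_univ_pi.2 fun j => ?_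
    have hkj := Set.mem_univ_pi.1 (hBdef ▸ hk) j
    simp only [hJdef] at hkj
    have hπ : π < 2 * π := by have := Real.pi_pos; linarith
    by_cases hj : j = j0
    · rw [if_pos hj] at hkj
      exact ⟨by linarith [hkj.1], by linarith [hkj.2]⟩
    · rw [if_neg hj] at hkj
      exact ⟨by linarith [hkj.1], by linarith [hkj.2]⟩
  rw [eq_top_iff]
  calc (⊤:ℝ≥0∞) = ∫⁻ k, B.indicator G k := hmain.symm
    _ = ∫⁻ k in B, G k := lintegral_indicator hBmeas G
    _ ≤ ∫⁻ k in Set.pi Set.univ (fun _ : Fin n => Set.Ico (0 : ℝ) (2 * π)), G k :=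
        lintegral_mono_set hBA
    _ = _ := rfl

/-- if `μ ≠ 0` and `λ ∈ (V₀ - 2μ, V₀ + 2μ)`, then
`k ↦ (2Σⱼ|μⱼ|cos kⱼ + V₀ - λ)⁻¹` is not square-integrable on `[0,2π)ⁿ`. -/
theorem stmt_12 (n : ℕ) (hn : 1 ≤ n) (μv : Fin n → ℂ) (V₀ : ℝ)
    (hμ : (∑ j, ‖μv j‖) ≠ 0)
    (lam : ℝ)
    (hlam : lam ∈ Set.Ioo (V₀ - 2 * ∑ j, ‖μv j‖)
                          (V₀ + 2 * ∑ j, ‖μv j‖)) :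
    ∫⁻ k in Set.pi Set.univ (fun _ : Fin n => Set.Ico (0 : ℝ) (2 * π)),
        ((ENNReal.ofReal
          |2 * ∑ j, ‖μv j‖ * Real.cos (k j) + V₀ - lam|) ^ 2)⁻¹ = ⊤ := by
  have ha : ∀ j, 0 ≤ ‖μv j‖ := fun j => norm_nonneg _
  have hS : 0 < ∑ j, ‖μv j‖ :=
    lt_of_le_of_ne (Finset.sum_nonneg fun j _ => ha j) (Ne.symm hμ)
  exact main_aux n (fun j => ‖μv j‖) ha V₀ lam hS hlam.1 hlam.2
end

section
/- Assume μ ≠ 0. If λ ∈ ℝ is an eigenvalue of T (i.e., Tφ = λφ for some nonzero φ ∈ 𝒦), then λ lies in the open interval (V₀ − 2μ, V₀ + 2μ). -/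
open MeasureTheory Filter Topology ComplexConjugate ContinuousLinearMap
open scoped ENNReal Real

noncomputable section

local notation "⟪" x ", " y "⟫" => @inner ℂ _ _ x y

-- aux lemma: no ℓ² eigenfunction of the shift
lemma no_shift_eig {n : ℕ} (j : Fin n) (ψ : Kt n) (r : ℂ)
    (hrabs : ‖r‖ = 1)
    (hr : ∀ x, ψ (x + Pi.single j 1) = r * ψ x) : ψ = 0 := by
  by_contra h
  have hco : ⇑ψ ≠ 0 := fun hc => h (lp.ext hc)
  obtain ⟨x₀, hx₀⟩ := Function.ne_iff.mp hco
  have hr0 : r ≠ 0 := fun h0 => by simp [h0] at hrabs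
  have key : ∀ k : ℤ, ψ (x₀ + k • Pi.single j 1) = r ^ k * ψ x₀ := by
    intro k
    induction k using Int.induction_on with
    | zero => simp
    | succ k ih =>
        have : x₀ + ((k : ℤ) + 1) • Pi.single j 1
            = (x₀ + (k : ℤ) • Pi.single j 1) + Pi.single j 1 := by
          rw [add_smul, one_smul, add_assoc]
        rw [this, hr, ih, zpow_add_one₀ hr0]; ring
    | pred k ih =>
        have h2 : x₀ + (-(k : ℤ) - 1) • Pi.single j 1 + Pi.single j 1
            = x₀ + (-(k : ℤ)) • Pi.single j 1 := by
          rw [sub_smul, one_smul]; abel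
        have h3 := hr (x₀ + (-(k : ℤ) - 1) • Pi.single j 1)
        rw [h2, ih] at h3
        rw [zpow_sub_one₀ hr0, mul_comm (r ^ (-(k : ℤ))) r⁻¹, mul_assoc, h3,
          inv_mul_cancel_left₀ hr0]
  have hinj : Function.Injective fun k : ℤ => x₀ + k • Pi.single j 1 := by
    intro k l hkl
    have := congrFun hkl j
    simpa using this
  have hsum : Summable ((fun x => ‖ψ x‖ ^ (2 : ℝ≥0∞).toReal) ∘
      fun k : ℤ => x₀ + k • Pi.single j 1) :=
    ((lp.memℓp ψ).summable (by norm_num)).comp_injective hinj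
  have hconst : Summable (fun _ : ℤ => ‖ψ x₀‖ ^ (2 : ℝ≥0∞).toReal) := by
    refine (summable_congr ?_).mp hsum
    intro k
    simp only [Function.comp_apply, key k]
    rw [norm_mul, norm_zpow, hrabs, one_zpow, one_mul]
  have h0 : ‖ψ x₀‖ ^ (2 : ℝ≥0∞).toReal = 0 := (summable_const_iff _).mp hconst
  have h2 : (2 : ℝ≥0∞).toReal = ((2 : ℕ) : ℝ) := by norm_num
  rw [h2, Real.rpow_natCast] at h0
  exact hx₀ (norm_eq_zero.mp (pow_eq_zero_iff (by norm_num : (2:ℕ) ≠ 0) |>.mp h0))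

lemma iota_inner {n : ℕ} {ι : Ks n →L[ℂ] Kt n} (hι : IsIota ι) (φ χ : Ks n) :
    ⟪ι φ, ι χ⟫ = ⟪φ, χ⟫ := by
  rw [lp.inner_eq_tsum, lp.inner_eq_tsum]
  have hsupp : Function.support (fun x : Fin n → ℤ => ⟪(ι φ) x, (ι χ) x⟫)
      ⊆ {x : Fin n → ℤ | x ≠ 0} := by
    intro x hx
    simp only [Set.mem_setOf_eq]
    intro h0
    apply hx
    show ⟪(ι φ) x, (ι χ) x⟫ = 0
    rw [hι φ x, hι χ x]
    simp [h0]
  rw [← tsum_subtype_eq_of_support_subset hsupp]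
  refine (tsum_congr fun x => ?_).symm
  rcases x with ⟨x, hx⟩
  have hx' : x ≠ 0 := hx
  show ⟪(φ : ∀ _, ℂ) ⟨x, hx⟩, (χ : ∀ _, ℂ) ⟨x, hx⟩⟫ = ⟪(ι φ) x, (ι χ) x⟫
  rw [hι φ x, hι χ x]
  simp [hx']

lemma shift_inner_self {n : ℕ} {L : Fin n → (Kt n →L[ℂ] Kt n)} (hL : IsShift L)
    (j : Fin n) (ψ : Kt n) : ⟪L j ψ, L j ψ⟫ = ⟪ψ, ψ⟫ := by
  rw [lp.inner_eq_tsum, lp.inner_eq_tsum,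
    ← Equiv.tsum_eq (Equiv.addRight (Pi.single j 1))
      (fun x => ⟪ψ x, ψ x⟫)]
  exact tsum_congr fun x => by rw [hL j ψ x]; rfl

set_option maxHeartbeats 1000000 in
/-- if `μ ≠ 0` and `λ ∈ ℝ` is an eigenvalue of `T`, then
`λ ∈ (V₀ - 2μ, V₀ + 2μ)`. -/
theorem stmt_17 (n : ℕ) (hn : 1 ≤ n) (μv : Fin n → ℂ) (V₀ : ℝ)
    (hμ : (∑ j, ‖μv j‖) ≠ 0)
    (L : Fin n → (Kt n →L[ℂ] Kt n)) (hL : IsShift L)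
    (ι : Ks n →L[ℂ] Kt n) (hι : IsIota ι)
    (lam : ℝ) (φ : Ks n) (hφ : φ ≠ 0)
    (heig : Tops μv V₀ L ι φ = (lam : ℂ) • φ) :
    lam ∈ Set.Ioo (V₀ - 2 * ∑ j, ‖μv j‖)
                  (V₀ + 2 * ∑ j, ‖μv j‖) := by
  classical
  set ψ : Kt n := ι φ with hψdef
  set N : ℝ := ‖φ‖ ^ 2 with hNdef
  have hNpos : 0 < N := by
    have : 0 < ‖φ‖ := norm_pos_iff.mpr hφ
    positivity
  have hφφ : ⟪φ, φ⟫ = (N : ℂ) := by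
    rw [inner_self_eq_norm_sq_to_K (𝕜 := ℂ), hNdef]; norm_cast
  have hψψ : ⟪ψ, ψ⟫ = (N : ℂ) := by rw [hψdef, iota_inner hι, hφφ]
  have hψnorm : ‖ψ‖ = ‖φ‖ := by
    rw [norm_eq_sqrt_re_inner (𝕜 := ℂ), norm_eq_sqrt_re_inner (𝕜 := ℂ) φ, hψψ, ← hφφ]
  have hψ0 : ψ ≠ 0 := by
    intro h
    apply hφ
    have : ⟪φ, φ⟫ = 0 := by rw [← iota_inner hι, ← hψdef, h, inner_zero_left]
    exact inner_self_eq_zero.mp this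
  set a : Fin n → ℂ := fun j => ⟪ψ, L j ψ⟫ with hadef
  have hLnorm : ∀ j, ‖L j ψ‖ = ‖ψ‖ := by
    intro j
    rw [norm_eq_sqrt_re_inner (𝕜 := ℂ), norm_eq_sqrt_re_inner (𝕜 := ℂ) ψ,
      shift_inner_self hL j ψ]
  have habs : ∀ j, ‖a j‖ ≤ N := by
    intro j
    have := norm_inner_le_norm (𝕜 := ℂ) ψ (L j ψ)
    rw [hLnorm j, hψnorm] at this
    calc ‖a j‖ = ‖(a j : ℂ)‖ := rfl
      _ ≤ ‖φ‖ * ‖φ‖ := this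
      _ = N := by rw [hNdef]; ring
  have hstrict : ∀ j, ‖a j‖ < N := by
    intro j
    rcases lt_or_eq_of_le (habs j) with h | h
    · exact h
    · exfalso
      have hL0 : L j ψ ≠ 0 := by
        intro h0
        rw [← norm_eq_zero, hLnorm j, hψnorm] at h0
        exact hφ (by rwa [norm_eq_zero] at h0)
      have heq : ‖⟪ψ, L j ψ⟫‖ = ‖ψ‖ * ‖L j ψ‖ := by
        rw [hLnorm j, hψnorm] at *
        rw [h]
        rw [hNdef]; ring
      obtain ⟨r, hr0, hrψ⟩ := (norm_inner_eq_norm_iff hψ0 hL0).mp heq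
      have hrn : ‖r‖ = 1 := by
        have h1 : ‖L j ψ‖ = ‖r‖ * ‖ψ‖ := by rw [hrψ, norm_smul]
        rw [hLnorm j] at h1
        have hψn0 : ‖ψ‖ ≠ 0 := by
          rw [hψnorm]; exact norm_ne_zero_iff.mpr hφ
        have hr1 : ‖r‖ * ‖ψ‖ = 1 * ‖ψ‖ := by rw [one_mul, ← h1]
        have : ‖r‖ = 1 := mul_right_cancel₀ hψn0 hr1
        exact this
      have hpt : ∀ x, ψ (x + Pi.single j 1) = r * ψ x := by
        intro x
        have := congrFun (congrArg (fun (f : Kt n) => (f : (Fin n → ℤ) → ℂ)) hrψ) x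
        simp only [lp.coeFn_smul, Pi.smul_apply, smul_eq_mul] at this
        rw [← hL j ψ x, this]
      exact hψ0 (no_shift_eig j ψ r hrn hpt)
  -- main identity
  have hadj : ∀ j, ⟪ψ, ContinuousLinearMap.adjoint (L j) ψ⟫ = conj (a j) := by
    intro j
    rw [ContinuousLinearMap.adjoint_inner_right, ← inner_conj_symm]
  have hT0 : T0op μv V₀ L ψ
      = (∑ j, (μv j • L j ψ + conj (μv j) • ContinuousLinearMap.adjoint (L j) ψ))
        + (V₀ : ℂ) • ψ := by
    simp [T0op, ContinuousLinearMap.sum_apply]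
    rfl
  have hinner : ⟪ψ, T0op μv V₀ L ψ⟫
      = ∑ j, (μv j * a j + conj (μv j * a j)) + (V₀ : ℂ) * (N : ℂ) := by
    rw [hT0, inner_add_right, inner_sum, inner_smul_right, hψψ]
    congr 1
    refine Finset.sum_congr rfl fun j _ => ?_
    rw [inner_add_right, inner_smul_right, inner_smul_right, hadj j, map_mul]
  have hkey : (lam : ℂ) * (N : ℂ)
      = ∑ j, (μv j * a j + conj (μv j * a j)) + (V₀ : ℂ) * (N : ℂ) := by
    rw [← hinner]
    have h1 : ⟪φ, Tops μv V₀ L ι φ⟫ = ⟪ψ, T0op μv V₀ L ψ⟫ := by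
      rw [Tops]
      simp only [ContinuousLinearMap.comp_apply]
      rw [ContinuousLinearMap.adjoint_inner_right, hψdef]
    rw [← h1, heig, inner_smul_right, hφφ]
  clear_value a ψ N
  have hre : (lam - V₀) * N = ∑ j, 2 * (μv j * a j).re := by
    have hsum : ∑ j, (μv j * a j + conj (μv j * a j))
        = ((∑ j, 2 * (μv j * a j).re : ℝ) : ℂ) := by
      push_cast
      exact Finset.sum_congr rfl fun j _ => by
        rw [Complex.add_conj]; push_cast; ring
    have h : ((lam * N : ℝ) : ℂ) = (((∑ j, 2 * (μv j * a j).re) + V₀ * N : ℝ) : ℂ) := by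
      push_cast
      rw [hkey, hsum]
      push_cast
      ring
    have h2 := Complex.ofReal_inj.mp h
    linarith
  obtain ⟨j₀, hj₀⟩ : ∃ j, μv j ≠ 0 := by
    by_contra hc
    push_neg at hc
    exact hμ (Finset.sum_eq_zero fun j _ => by rw [hc j, norm_zero])
  have hterm_le : ∀ j ∈ Finset.univ, |2 * (μv j * a j).re|
      ≤ 2 * (‖μv j‖ * N) := by
    intro j _
    rw [abs_mul, abs_two]
    have h1 : |(μv j * a j).re| ≤ ‖μv j * a j‖ := Complex.abs_re_le_norm _
    rw [norm_mul] at h1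
    have h2 : ‖μv j‖ * ‖a j‖ ≤ ‖μv j‖ * N :=
      mul_le_mul_of_nonneg_left (habs j) (norm_nonneg _)
    linarith
  have hterm_lt : |2 * (μv j₀ * a j₀).re| < 2 * (‖μv j₀‖ * N) := by
    rw [abs_mul, abs_two]
    have h1 : |(μv j₀ * a j₀).re| ≤ ‖μv j₀ * a j₀‖ := Complex.abs_re_le_norm _
    rw [norm_mul] at h1
    have hpos : 0 < ‖μv j₀‖ := norm_pos_iff.mpr hj₀
    have h2 : ‖μv j₀‖ * ‖a j₀‖ < ‖μv j₀‖ * N :=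
      mul_lt_mul_of_pos_left (hstrict j₀) hpos
    linarith
  have hsum_lt : |(lam - V₀) * N| < 2 * (∑ j, ‖μv j‖) * N := by
    rw [hre]
    calc |∑ j, 2 * (μv j * a j).re| ≤ ∑ j, |2 * (μv j * a j).re| :=
          Finset.abs_sum_le_sum_abs _ _
      _ < ∑ j, 2 * (‖μv j‖ * N) :=
          Finset.sum_lt_sum hterm_le ⟨j₀, Finset.mem_univ _, hterm_lt⟩
      _ = 2 * (∑ j, ‖μv j‖) * N := by
          rw [Finset.sum_congr rfl (fun j _ => show 2 * (‖μv j‖ * N)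
            = 2 * N * ‖μv j‖ by ring), ← Finset.mul_sum]
          ring
  have hfin : |lam - V₀| < 2 * ∑ j, ‖μv j‖ := by
    rw [abs_mul, abs_of_pos hNpos] at hsum_lt
    exact (mul_lt_mul_iff_of_pos_right hNpos).mp hsum_lt
  have := abs_lt.mp hfin
  exact ⟨by linarith [this.1], by linarith [this.2]⟩
end
end
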